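/- arXiv:0805.1650 — 6 statements merged into one kernel-verified Lean document; each statement's English description precedes it below -/
import Mathlib

section
/- Assume ω is total, i.e. the linear span of {ω(A,B) : A,B ∈ H} equals 𝐂. Then there exists a constant K < ∞ such that d(e,(A,a)) ≤ K (‖A‖_H + sqrt(‖a‖_𝐂)) for all (A,a) ∈ 𝔤_CM. -/
open MeasureTheory

/-- The length of the `C¹` path `s ↦ (w s, c s)`, `0 ≤ s ≤ 1`, with respect to the
left invariant Riemannian metric on the Heisenberg type group determined by `ω`. -/
noncomputable def pathLen {H C : Type*} [NormedAddCommGroup H] [InnerProductSpace ℝ H]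
    [NormedAddCommGroup C] [InnerProductSpace ℝ C]
    (ω : H →L[ℝ] H →L[ℝ] C) (w : ℝ → H) (c : ℝ → C) : ℝ :=
  ∫ s in (0:ℝ)..1,
    Real.sqrt (‖deriv w s‖ ^ 2 + ‖deriv c s - (2:ℝ)⁻¹ • ω (w s) (deriv w s)‖ ^ 2)

/-- The left invariant Riemannian distance on `𝔤_CM = H × 𝐂`:  the infimum of the lengths of
`C¹` paths joining `x` to `y`. -/
noncomputable def dCM {H C : Type*} [NormedAddCommGroup H] [InnerProductSpace ℝ H]
    [NormedAddCommGroup C] [InnerProductSpace ℝ C]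
    (ω : H →L[ℝ] H →L[ℝ] C) (x y : H × C) : ℝ :=
  sInf {L : ℝ | ∃ w : ℝ → H, ∃ c : ℝ → C, ContDiff ℝ 1 w ∧ ContDiff ℝ 1 c ∧
    w 0 = x.1 ∧ c 0 = x.2 ∧ w 1 = y.1 ∧ c 1 = y.2 ∧ L = pathLen ω w c}

open Finset

namespace Heisen

variable {H C : Type*} [NormedAddCommGroup H] [InnerProductSpace ℝ H]
  [NormedAddCommGroup C] [InnerProductSpace ℝ C]

lemma deriv_f_neg {x : ℝ} (hx : x < 0) : deriv Real.smoothTransition x = 0 := by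
  have h : Real.smoothTransition =ᶠ[nhds x] (fun _ => 0) := by
    filter_upwards [Iio_mem_nhds hx] with y hy
    exact Real.smoothTransition.zero_of_nonpos (le_of_lt hy)
  rw [h.deriv_eq]; exact deriv_const x 0

lemma deriv_f_gt {x : ℝ} (hx : 1 < x) : deriv Real.smoothTransition x = 0 := by
  have h : Real.smoothTransition =ᶠ[nhds x] (fun _ => 1) := by
    filter_upwards [Ioi_mem_nhds hx] with y hy
    exact Real.smoothTransition.one_of_one_le (le_of_lt hy)
  rw [h.deriv_eq]; exact deriv_const x 1

lemma cont_deriv_f : Continuous (deriv Real.smoothTransition) :=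
  (Real.smoothTransition.contDiff (n := (⊤:ℕ∞))).continuous_deriv (by norm_num)

lemma exists_Mf : ∃ M : ℝ, 0 ≤ M ∧ ∀ x, |deriv Real.smoothTransition x| ≤ M := by
  have hcs : HasCompactSupport (deriv Real.smoothTransition) := by
    apply HasCompactSupport.intro (isCompact_Icc (a := (0:ℝ)) (b := 1))
    intro x hx
    simp only [Set.mem_Icc, not_and_or, not_le] at hx
    rcases hx with h | h
    · exact deriv_f_neg h
    · exact deriv_f_gt h
  obtain ⟨M, hM⟩ := hcs.exists_bound_of_continuous cont_deriv_f
  exact ⟨M, le_trans (abs_nonneg _) ((Real.norm_eq_abs _) ▸ hM 0), fun x => (Real.norm_eq_abs _) ▸ hM x⟩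

/-- global bound for |deriv smoothTransition| -/
noncomputable def Mf : ℝ := exists_Mf.choose
lemma Mf_nonneg : 0 ≤ Mf := exists_Mf.choose_spec.1
lemma Mf_bound (x : ℝ) : |deriv Real.smoothTransition x| ≤ Mf := exists_Mf.choose_spec.2 x

lemma dCM_nonneg_mem {ω : H →L[ℝ] H →L[ℝ] C} {x y : H × C} :
    ∀ L ∈ {L : ℝ | ∃ w : ℝ → H, ∃ c : ℝ → C, ContDiff ℝ 1 w ∧ ContDiff ℝ 1 c ∧
      w 0 = x.1 ∧ c 0 = x.2 ∧ w 1 = y.1 ∧ c 1 = y.2 ∧ L = pathLen ω w c}, 0 ≤ L := by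
  rintro L ⟨w, c, -, -, -, -, -, -, rfl⟩
  exact intervalIntegral.integral_nonneg (by norm_num) (fun u _ => Real.sqrt_nonneg _)

lemma word_bound [CompleteSpace C] (ω : H →L[ℝ] H →L[ℝ] C)
    (hskew : ∀ A B : H, ω A B = - ω B A) (m : ℕ) (B : ℕ → H) :
    dCM ω ((0:H), (0:C)) (∑ k ∈ range m, B k,
      (2:ℝ)⁻¹ • ∑ k ∈ range m, ∑ j ∈ range k, ω (B j) (B k))
    ≤ Mf * m * ∑ k ∈ range m, ‖B k‖ := by
  classical
  have hself : ∀ x : H, ω x x = 0 := by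
    intro x
    have h := hskew x x
    have h2 : ω x x + ω x x = 0 := by nth_rewrite 2 [hskew x x]; simp
    have h3 : (2:ℝ) • ω x x = 0 := by rw [two_smul]; exact h2
    simpa using (smul_eq_zero.mp h3).resolve_left (by norm_num)
  set f := Real.smoothTransition with hf
  have f0 : ∀ x : ℝ, x ≤ 0 → f x = 0 := fun x hx => Real.smoothTransition.zero_of_nonpos hx
  have f1 : ∀ x : ℝ, 1 ≤ x → f x = 1 := fun x hx => Real.smoothTransition.one_of_one_le hx
  set w : ℝ → H := fun s => ∑ k ∈ range m, f ((m:ℝ)*s - k) • B k with hwdef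
  set v : ℝ → H := fun s => ∑ k ∈ range m, (deriv f ((m:ℝ)*s - k) * m) • B k with hvdef
  have haff : ∀ k : ℕ, ∀ s : ℝ, HasDerivAt (fun s : ℝ => (m:ℝ)*s - k) m s := by
    intro k s
    simpa using ((hasDerivAt_id s).const_mul (m:ℝ)).sub_const (k:ℝ)
  have hw : ∀ s, HasDerivAt w (v s) s := by
    intro s
    apply HasDerivAt.fun_sum
    intro k _
    have h2 : HasDerivAt f (deriv f ((m:ℝ)*s - k)) ((m:ℝ)*s - k) :=
      ((Real.smoothTransition.contDiff (n := 1)).differentiable one_ne_zero _).hasDerivAt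
    exact ((h2.comp s (haff k s)).smul_const (B k))
  have hvcont : Continuous v := by
    apply continuous_finset_sum
    intro k _
    exact ((cont_deriv_f.comp ((continuous_const.mul continuous_id).sub continuous_const)).mul continuous_const).smul continuous_const
  have hwcont : Continuous w := by
    apply continuous_finset_sum
    intro k _
    exact (Real.smoothTransition.continuous.comp ((continuous_const.mul continuous_id).sub continuous_const)).smul continuous_const
  set g : ℝ → C := fun u => ω (w u) (v u) with hgdef
  have hgcont : Continuous g := (ω.continuous.comp hwcont).clm_apply hvcont
  set c : ℝ → C := fun s => (2:ℝ)⁻¹ • ∫ u in (0:ℝ)..s, g u with hcdef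
  have hc : ∀ s, HasDerivAt c ((2:ℝ)⁻¹ • g s) s := by
    intro s
    exact ((hgcont.integral_hasStrictDerivAt 0 s).hasDerivAt).const_smul _
  have hcdA : ∀ k : ℕ, ContDiff ℝ 1 (fun s : ℝ => (m:ℝ)*s - (k:ℝ)) := fun k =>
    (contDiff_const.mul contDiff_id).sub contDiff_const
  have hwC1 : ContDiff ℝ 1 w := ContDiff.sum (fun k _ =>
    ((Real.smoothTransition.contDiff.comp (hcdA k)).smul contDiff_const))
  have hdc : deriv c = fun s => (2:ℝ)⁻¹ • g s := funext fun s => (hc s).deriv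
  have hcC1 : ContDiff ℝ 1 c := by
    rw [contDiff_one_iff_deriv]
    exact ⟨fun s => (hc s).differentiableAt, hdc ▸ hgcont.const_smul _⟩
  have hdw : deriv w = v := funext fun s => (hw s).deriv
  have hw0 : w 0 = 0 := by
    apply Finset.sum_eq_zero
    intro k _
    rw [show (m:ℝ)*0 - k = -(k:ℝ) by ring,
      f0 _ (neg_nonpos.mpr (Nat.cast_nonneg k)), zero_smul]
  have hw1 : w 1 = ∑ k ∈ range m, B k := by
    apply Finset.sum_congr rfl
    intro k hk
    have hkm : (k:ℝ) + 1 ≤ m := by exact_mod_cast Finset.mem_range.mp hk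
    rw [f1 _ (by linarith), one_smul]
  have hc0 : c 0 = 0 := by simp [hcdef]
  -- pointwise scalar integrand lemmas
  have I_lt : ∀ j k : ℕ, j < k → k < m →
      (∫ u in (0:ℝ)..1, f ((m:ℝ)*u - j) * (deriv f ((m:ℝ)*u - k) * m)) = 1 := by
    intro j k hjk hkm
    have hptw : ∀ u : ℝ, f ((m:ℝ)*u - j) * (deriv f ((m:ℝ)*u - k) * m)
        = deriv f ((m:ℝ)*u - k) * m := by
      intro u
      rcases lt_or_ge ((m:ℝ)*u - k) 0 with h | h
      · rw [deriv_f_neg h]; ring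
      · have hj1 : ((j:ℝ)+1) ≤ (k:ℝ) := by exact_mod_cast hjk
        rw [f1 _ (by linarith), one_mul]
    simp only [hptw]
    have hftc : ∀ u ∈ Set.uIcc (0:ℝ) 1, HasDerivAt (fun u : ℝ => f ((m:ℝ)*u - k))
        (deriv f ((m:ℝ)*u - k) * m) u := by
      intro u _
      exact (((Real.smoothTransition.contDiff (n := 1)).differentiable one_ne_zero _).hasDerivAt).comp u (haff k u)
    rw [intervalIntegral.integral_eq_sub_of_hasDerivAt hftc
      (((cont_deriv_f.comp ((continuous_const.mul continuous_id).sub continuous_const)).mul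
        continuous_const).intervalIntegrable _ _)]
    have hkm' : (k:ℝ) + 1 ≤ (m:ℝ) := by exact_mod_cast hkm
    rw [f1 _ (by linarith : (1:ℝ) ≤ (m:ℝ)*1 - k),
      show (m:ℝ)*0 - k = -(k:ℝ) by ring,
      f0 _ (neg_nonpos.mpr (Nat.cast_nonneg k))]
    norm_num
  have I_gt : ∀ j k : ℕ, k < j → ∀ u : ℝ,
      f ((m:ℝ)*u - j) * (deriv f ((m:ℝ)*u - k) * m) = 0 := by
    intro j k hkj u
    rcases le_or_gt ((m:ℝ)*u - k) 1 with h | h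
    · have hk1 : (k:ℝ) + 1 ≤ (j:ℝ) := by exact_mod_cast hkj
      rw [f0 _ (by linarith : (m:ℝ)*u - j ≤ 0), zero_mul]
    · rw [deriv_f_gt h]; ring
  -- expansion of g
  have hgexp : g = fun u => ∑ j ∈ range m, ∑ k ∈ range m,
      (f ((m:ℝ)*u - j) * (deriv f ((m:ℝ)*u - k) * m)) • ω (B j) (B k) := by
    funext u
    show ω (w u) (v u) = _
    rw [hwdef, hvdef]
    simp only [map_sum, _root_.map_smul, ContinuousLinearMap.coe_sum', Finset.sum_apply,
      ContinuousLinearMap.coe_smul', Pi.smul_apply, smul_smul]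
    rw [Finset.sum_comm]
    simp only [Finset.smul_sum, smul_smul]
    exact Finset.sum_congr rfl fun k _ => Finset.sum_congr rfl fun j _ => by rw [mul_comm]
  have hint : (∫ u in (0:ℝ)..1, g u)
      = ∑ k ∈ range m, ∑ j ∈ range k, ω (B j) (B k) := by
    rw [hgexp]
    rw [intervalIntegral.integral_finset_sum]
    swap
    · intro j _
      apply Continuous.intervalIntegrable
      apply continuous_finset_sum
      intro k _
      apply Continuous.smul _ continuous_const
      exact (Real.smoothTransition.continuous.comp
          ((continuous_const.mul continuous_id).sub continuous_const)).mul
        ((cont_deriv_f.comp ((continuous_const.mul continuous_id).sub continuous_const)).mul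
          continuous_const)
    have : ∀ j ∈ range m, (∫ u in (0:ℝ)..1, ∑ k ∈ range m,
        (f ((m:ℝ)*u - j) * (deriv f ((m:ℝ)*u - k) * m)) • ω (B j) (B k))
        = ∑ k ∈ range m, (∫ u in (0:ℝ)..1,
          f ((m:ℝ)*u - j) * (deriv f ((m:ℝ)*u - k) * m)) • ω (B j) (B k) := by
      intro j _
      rw [intervalIntegral.integral_finset_sum]
      · exact Finset.sum_congr rfl fun k _ => intervalIntegral.integral_smul_const _ _
      · intro k _
        apply Continuous.intervalIntegrable
        apply Continuous.smul _ continuous_const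
        exact (Real.smoothTransition.continuous.comp
            ((continuous_const.mul continuous_id).sub continuous_const)).mul
          ((cont_deriv_f.comp ((continuous_const.mul continuous_id).sub continuous_const)).mul
            continuous_const)
    rw [Finset.sum_congr rfl this, Finset.sum_comm]
    apply Finset.sum_congr rfl
    intro k hk
    have hkm := Finset.mem_range.mp hk
    rw [Finset.range_eq_Ico, ← Finset.sum_Ico_consecutive _ (Nat.zero_le k) (le_of_lt hkm)]
    have h1 : ∑ j ∈ Finset.Ico 0 k, (∫ u in (0:ℝ)..1,
        f ((m:ℝ)*u - j) * (deriv f ((m:ℝ)*u - k) * m)) • ω (B j) (B k)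
        = ∑ j ∈ Finset.Ico 0 k, ω (B j) (B k) := by
      apply Finset.sum_congr rfl
      intro j hj
      rw [I_lt j k (Finset.mem_Ico.mp hj).2 hkm, one_smul]
    have h2 : ∑ j ∈ Finset.Ico k m, (∫ u in (0:ℝ)..1,
        f ((m:ℝ)*u - j) * (deriv f ((m:ℝ)*u - k) * m)) • ω (B j) (B k) = 0 := by
      apply Finset.sum_eq_zero
      intro j hj
      rcases eq_or_lt_of_le (Finset.mem_Ico.mp hj).1 with h | h
      · rw [← h, hself, smul_zero]
      · have : ∀ u:ℝ, f ((m:ℝ)*u - j) * (deriv f ((m:ℝ)*u - k) * m) = 0 := I_gt j k h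
        simp only [this, intervalIntegral.integral_zero, zero_smul, Finset.sum_const_zero]
    rw [h1, h2, add_zero, Finset.range_eq_Ico]
  have hc1 : c 1 = (2:ℝ)⁻¹ • ∑ k ∈ range m, ∑ j ∈ range k, ω (B j) (B k) := by
    show (2:ℝ)⁻¹ • (∫ u in (0:ℝ)..1, g u) = _
    rw [hint]
  -- membership
  have hmem : pathLen ω w c ∈ {L : ℝ | ∃ w' : ℝ → H, ∃ c' : ℝ → C,
      ContDiff ℝ 1 w' ∧ ContDiff ℝ 1 c' ∧ w' 0 = ((0:H),(0:C)).1 ∧ c' 0 = ((0:H),(0:C)).2 ∧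
      w' 1 = (∑ k ∈ range m, B k, (2:ℝ)⁻¹ • ∑ k ∈ range m, ∑ j ∈ range k, ω (B j) (B k)).1 ∧
      c' 1 = (∑ k ∈ range m, B k, (2:ℝ)⁻¹ • ∑ k ∈ range m, ∑ j ∈ range k, ω (B j) (B k)).2 ∧
      L = pathLen ω w' c'} :=
    ⟨w, c, hwC1, hcC1, hw0, hc0, hw1, hc1, rfl⟩
  have hle : dCM ω ((0:H), (0:C)) (∑ k ∈ range m, B k,
      (2:ℝ)⁻¹ • ∑ k ∈ range m, ∑ j ∈ range k, ω (B j) (B k)) ≤ pathLen ω w c :=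
    csInf_le ⟨0, fun L hL => dCM_nonneg_mem L hL⟩ hmem
  refine le_trans hle ?_
  -- evaluate pathLen
  have hptw : ∀ s : ℝ, Real.sqrt (‖deriv w s‖ ^ 2
      + ‖deriv c s - (2:ℝ)⁻¹ • ω (w s) (deriv w s)‖ ^ 2) = ‖v s‖ := by
    intro s
    rw [hdw, hdc]
    have : (2:ℝ)⁻¹ • g s - (2:ℝ)⁻¹ • ω (w s) (v s) = 0 := sub_self _
    rw [this, norm_zero]
    simp [Real.sqrt_sq (norm_nonneg (v s))]
  unfold pathLen
  simp only [hptw]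
  have hbound : ∀ s ∈ Set.Icc (0:ℝ) 1, ‖v s‖ ≤ Mf * m * ∑ k ∈ range m, ‖B k‖ := by
    intro s _
    calc ‖v s‖ ≤ ∑ k ∈ range m, ‖(deriv f ((m:ℝ)*s - k) * m) • B k‖ := norm_sum_le _ _
      _ ≤ ∑ k ∈ range m, (Mf * m) * ‖B k‖ := by
          apply Finset.sum_le_sum
          intro k _
          rw [norm_smul, Real.norm_eq_abs, abs_mul, Nat.abs_cast]
          exact mul_le_mul_of_nonneg_right
            (mul_le_mul_of_nonneg_right (Mf_bound _) (Nat.cast_nonneg m)) (norm_nonneg _)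
      _ = Mf * m * ∑ k ∈ range m, ‖B k‖ := by rw [← Finset.mul_sum]
  calc (∫ s in (0:ℝ)..1, ‖v s‖) ≤ ∫ _ in (0:ℝ)..1, (Mf * m * ∑ k ∈ range m, ‖B k‖) := by
        apply intervalIntegral.integral_mono_on zero_le_one
          (hvcont.norm.intervalIntegrable _ _) intervalIntegrable_const hbound
    _ = Mf * m * ∑ k ∈ range m, ‖B k‖ := by simp

/-- the group-product endpoint of a word of horizontal moves -/
noncomputable def wt (ω : H →L[ℝ] H →L[ℝ] C) : List H → H × C
  | [] => (0, 0)
  | x :: L => (x + (wt ω L).1, (wt ω L).2 + (2:ℝ)⁻¹ • ω x (wt ω L).1)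

lemma wt_eq (ω : H →L[ℝ] H →L[ℝ] C) (L : List H) : wt ω L =
    (∑ k ∈ range L.length, L.getD k 0,
     (2:ℝ)⁻¹ • ∑ k ∈ range L.length, ∑ j ∈ range k, ω (L.getD j 0) (L.getD k 0)) := by
  induction L with
  | nil => simp [wt]
  | cons x L ih =>
    rw [show wt ω (x :: L) = (x + (wt ω L).1, (wt ω L).2 + (2:ℝ)⁻¹ • ω x (wt ω L).1) from rfl, ih]
    refine Prod.ext ?_ ?_
    · show x + ∑ k ∈ range L.length, L.getD k 0 = _
      rw [List.length_cons, Finset.sum_range_succ']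
      simp [add_comm]
    · show (2:ℝ)⁻¹ • _ + (2:ℝ)⁻¹ • ω x (∑ k ∈ range L.length, L.getD k 0) = _
      rw [← smul_add]
      congr 1
      rw [List.length_cons, Finset.sum_range_succ']
      have hin : ∀ k, ∑ j ∈ range (k+1), ω ((x :: L).getD j 0) ((x :: L).getD (k+1) 0)
          = ω x (L.getD k 0) + ∑ j ∈ range k, ω (L.getD j 0) (L.getD k 0) := by
        intro k
        rw [Finset.sum_range_succ']
        simp [add_comm]
      simp only [hin]
      rw [Finset.sum_add_distrib, ← map_sum]
      simp [add_comm]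

lemma sum_getD_norm (L : List H) :
    ∑ k ∈ range L.length, ‖L.getD k 0‖ = (L.map norm).sum := by
  induction L with
  | nil => simp
  | cons x L ih =>
    rw [List.length_cons, Finset.sum_range_succ']
    simp only [List.getD_cons_succ, List.getD_cons_zero]
    rw [ih, List.map_cons, List.sum_cons, add_comm]

lemma wt_append (ω : H →L[ℝ] H →L[ℝ] C) (L₁ L₂ : List H) : wt ω (L₁ ++ L₂) =
    ((wt ω L₁).1 + (wt ω L₂).1,
     (wt ω L₁).2 + (wt ω L₂).2 + (2:ℝ)⁻¹ • ω (wt ω L₁).1 (wt ω L₂).1) := by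
  induction L₁ with
  | nil => simp [wt]
  | cons x L ih =>
    rw [List.cons_append,
      show wt ω (x :: (L ++ L₂)) = (x + (wt ω (L ++ L₂)).1,
        (wt ω (L ++ L₂)).2 + (2:ℝ)⁻¹ • ω x (wt ω (L ++ L₂)).1) from rfl, ih,
      show wt ω (x :: L) = (x + (wt ω L).1, (wt ω L).2 + (2:ℝ)⁻¹ • ω x (wt ω L).1) from rfl]
    refine Prod.ext ?_ ?_
    · show x + ((wt ω L).1 + (wt ω L₂).1) = x + (wt ω L).1 + (wt ω L₂).1
      rw [add_assoc]
    · show (wt ω L).2 + (wt ω L₂).2 + (2:ℝ)⁻¹ • ω (wt ω L).1 (wt ω L₂).1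
          + (2:ℝ)⁻¹ • ω x ((wt ω L).1 + (wt ω L₂).1)
        = (wt ω L).2 + (2:ℝ)⁻¹ • ω x (wt ω L).1 + (wt ω L₂).2
          + (2:ℝ)⁻¹ • ω (x + (wt ω L).1) (wt ω L₂).1
      rw [map_add, map_add, ContinuousLinearMap.add_apply, smul_add, smul_add]
      abel

lemma wt_block (ω : H →L[ℝ] H →L[ℝ] C) (hskew : ∀ A B : H, ω A B = - ω B A) (P Q : H) :
    wt ω [P, Q, -P, -Q] = (0, ω P Q) := by
  have hself : ∀ x : H, ω x x = 0 := by
    intro x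
    have h2 : ω x x + ω x x = 0 := by nth_rewrite 2 [hskew x x]; simp
    have h3 : (2:ℝ) • ω x x = 0 := by rw [two_smul]; exact h2
    simpa using (smul_eq_zero.mp h3).resolve_left (by norm_num)
  simp only [wt, add_zero, map_zero, smul_zero, zero_add, map_neg, map_add,
    ContinuousLinearMap.neg_apply, ContinuousLinearMap.add_apply]
  refine Prod.ext ?_ ?_
  · show P + (Q + (-P + -Q)) = 0
    abel
  · simp only [hself, hskew Q P]
    module

lemma wt_blocks (ω : H →L[ℝ] H →L[ℝ] C) (hskew : ∀ A B : H, ω A B = - ω B A)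
    (l : List (H × H)) :
    wt ω (l.flatMap fun p => [p.1, p.2, -p.1, -p.2])
      = (0, (l.map fun p => ω p.1 p.2).sum) := by
  induction l with
  | nil => simp [wt]
  | cons p l ih =>
    rw [List.flatMap_cons, wt_append, ih, wt_block ω hskew]
    simp

lemma len_blocks (l : List (H × H)) :
    (l.flatMap fun p : H × H => [p.1, p.2, -p.1, -p.2]).length = 4 * l.length := by
  induction l with
  | nil => simp
  | cons p l ih => rw [List.flatMap_cons]; simp [ih]; ring

lemma norm_blocks (l : List (H × H)) :
    (((l.flatMap fun p : H × H => [p.1, p.2, -p.1, -p.2])).map norm).sum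
      = (l.map fun p => 2*(‖p.1‖ + ‖p.2‖)).sum := by
  induction l with
  | nil => simp
  | cons p l ih =>
    rw [List.flatMap_cons, List.map_append, List.sum_append, ih]
    simp
    ring

end Heisen

/-- If `ω` is total (the span of its range is all of `𝐂`), then there is a constant `K < ∞`
with `d(e,(A,a)) ≤ K (‖A‖_H + √‖a‖_𝐂)` for all `(A,a) ∈ 𝔤_CM`. -/
theorem dist_le_of_total
    {H C : Type*} [NormedAddCommGroup H] [InnerProductSpace ℝ H]
    [TopologicalSpace.SeparableSpace H]
    [NormedAddCommGroup C] [InnerProductSpace ℝ C] [FiniteDimensional ℝ C]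
    (ω : H →L[ℝ] H →L[ℝ] C)
    (hskew : ∀ A B : H, ω A B = - ω B A)
    (htotal : Submodule.span ℝ {c : C | ∃ A B : H, ω A B = c} = ⊤) :
    ∃ K : ℝ, ∀ (A : H) (a : C),
      dCM ω ((0 : H), (0 : C)) (A, a) ≤ K * (‖A‖ + Real.sqrt ‖a‖) := by
  classical
  open Heisen Finset in
  obtain ⟨bset, hbsub, hbspan, hbli⟩ :=
    exists_linearIndependent ℝ {c : C | ∃ A B : H, ω A B = c}
  rw [htotal] at hbspan
  haveI : Fintype bset := hbli.setFinite.fintype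
  let b : Module.Basis bset ℝ C := Module.Basis.mk hbli (by rw [Subtype.range_coe, hbspan])
  have hpair : ∀ i : bset, ∃ P Q : H, ω P Q = (i : C) := fun i => hbsub i.2
  choose P Q hPQ using hpair
  -- coordinate bound
  set φ : bset → C →L[ℝ] ℝ := fun i => LinearMap.toContinuousLinearMap (b.coord i) with hφ
  set M : ℝ := ∑ i : bset, ‖φ i‖ with hM
  have hM0 : 0 ≤ M := Finset.sum_nonneg fun i _ => norm_nonneg _
  have hMb : ∀ (a : C) (i : bset), |b.repr a i| ≤ M * ‖a‖ := by
    intro a i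
    have h1 : |b.repr a i| = ‖φ i a‖ := by
      simp [hφ, Module.Basis.coord_apply, Real.norm_eq_abs]
    rw [h1]
    calc ‖φ i a‖ ≤ ‖φ i‖ * ‖a‖ := (φ i).le_opNorm a
      _ ≤ M * ‖a‖ := by
          apply mul_le_mul_of_nonneg_right _ (norm_nonneg a)
          exact Finset.single_le_sum (fun j _ => norm_nonneg (φ j)) (Finset.mem_univ i)
  set n : ℕ := Fintype.card bset with hn
  set R : ℝ := ∑ i : bset, (‖P i‖ + ‖Q i‖) with hR
  have hR0 : 0 ≤ R := Finset.sum_nonneg fun i _ => by positivity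
  set c1 : ℝ := 2 * Real.sqrt M * R with hc1
  have hc10 : 0 ≤ c1 := by positivity
  refine ⟨Mf * (1 + 4*n) * max 1 c1, ?_⟩
  intro A a
  set t : bset → ℝ := fun i => b.repr a i with ht
  set u : bset → ℝ := fun i => Real.sqrt |t i| with hu
  set q : bset → ℝ := fun i => t i / Real.sqrt |t i| with hq
  have huq : ∀ i, u i * q i = t i := by
    intro i
    rcases eq_or_ne (t i) 0 with h | h
    · simp [hu, hq, h]
    · have : Real.sqrt |t i| ≠ 0 := by
        refine ne_of_gt (Real.sqrt_pos.mpr (abs_pos.mpr h))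
      show Real.sqrt |t i| * (t i / Real.sqrt |t i|) = t i
      field_simp
  have hub : ∀ i, |u i| ≤ Real.sqrt M * Real.sqrt ‖a‖ := by
    intro i
    rw [hu, abs_of_nonneg (Real.sqrt_nonneg _), ← Real.sqrt_mul hM0]
    exact Real.sqrt_le_sqrt (hMb a i)
  have hqb : ∀ i, |q i| ≤ Real.sqrt M * Real.sqrt ‖a‖ := by
    intro i
    have : |q i| = |t i| / Real.sqrt |t i| := by
      rw [hq, abs_div, abs_of_nonneg (Real.sqrt_nonneg _)]
    rw [this, Real.div_sqrt, ← Real.sqrt_mul hM0]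
    exact Real.sqrt_le_sqrt (hMb a i)
  set lst : List bset := (Finset.univ : Finset bset).toList with hlst
  set pl : List (H × H) := lst.map (fun i => (u i • P i, q i • Q i)) with hpl
  set L : List H := A :: pl.flatMap (fun p => [p.1, p.2, -p.1, -p.2]) with hL
  -- endpoint
  have hsum : ((pl.map fun p => ω p.1 p.2)).sum = a := by
    rw [hpl, List.map_map]
    have : ((fun p : H × H => ω p.1 p.2) ∘ fun i => (u i • P i, q i • Q i))
        = fun i => t i • (i : C) := by
      funext i
      show ω (u i • P i) (q i • Q i) = t i • (i : C)
      simp only [_root_.map_smul, ContinuousLinearMap.smul_apply, smul_smul]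
      rw [mul_comm, huq, hPQ]
    rw [this, Finset.sum_map_toList]
    have hsr := b.sum_repr a
    have h2 : ∀ i : bset, b i = (i : C) := fun i => Module.Basis.mk_apply hbli _ i
    simp only [h2] at hsr
    exact hsr
  have hwt : wt ω L = (A, a) := by
    rw [hL, show wt ω (A :: pl.flatMap (fun p => [p.1, p.2, -p.1, -p.2]))
      = (A + (wt ω _).1, (wt ω _).2 + (2:ℝ)⁻¹ • ω A (wt ω _).1) from rfl,
      wt_blocks ω hskew, hsum]
    simp
  -- length and norm facts
  have hlstlen : lst.length = n := by
    rw [hlst, Finset.length_toList]; exact Finset.card_univ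
  have hLlen : L.length = 1 + 4*n := by
    rw [hL, List.length_cons, len_blocks, hpl, List.length_map, hlstlen]; ring
  have hnorm : (L.map norm).sum ≤ ‖A‖ + c1 * Real.sqrt ‖a‖ := by
    rw [hL, List.map_cons, List.sum_cons, norm_blocks, hpl, List.map_map]
    apply add_le_add le_rfl
    have hbd : ∀ i : bset,
        2*(‖u i • P i‖ + ‖q i • Q i‖) ≤ 2 * Real.sqrt M * Real.sqrt ‖a‖ * (‖P i‖ + ‖Q i‖) := by
      intro i
      rw [norm_smul, norm_smul, Real.norm_eq_abs, Real.norm_eq_abs]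
      have h1 : |u i| * ‖P i‖ ≤ Real.sqrt M * Real.sqrt ‖a‖ * ‖P i‖ :=
        mul_le_mul_of_nonneg_right (hub i) (norm_nonneg _)
      have h2 : |q i| * ‖Q i‖ ≤ Real.sqrt M * Real.sqrt ‖a‖ * ‖Q i‖ :=
        mul_le_mul_of_nonneg_right (hqb i) (norm_nonneg _)
      calc 2*(|u i| * ‖P i‖ + |q i| * ‖Q i‖)
          ≤ 2*(Real.sqrt M * Real.sqrt ‖a‖ * ‖P i‖ + Real.sqrt M * Real.sqrt ‖a‖ * ‖Q i‖) := by
            apply mul_le_mul_of_nonneg_left (add_le_add h1 h2) (by norm_num)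
        _ = 2 * Real.sqrt M * Real.sqrt ‖a‖ * (‖P i‖ + ‖Q i‖) := by ring
    calc ((lst.map fun i => 2*(‖u i • P i‖ + ‖q i • Q i‖))).sum
        ≤ ((lst.map fun i => 2 * Real.sqrt M * Real.sqrt ‖a‖ * (‖P i‖ + ‖Q i‖))).sum := by
          apply List.sum_le_sum
          intro i _
          exact hbd i
      _ = 2 * Real.sqrt M * Real.sqrt ‖a‖ * R := by
          rw [hlst, Finset.sum_map_toList, hR, Finset.mul_sum]
      _ = c1 * Real.sqrt ‖a‖ := by rw [hc1]; ring
  -- apply word bound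
  have hword := word_bound ω hskew L.length (fun k => L.getD k 0)
  have hwteq := wt_eq ω L
  rw [hwt] at hwteq
  have hA : (∑ k ∈ Finset.range L.length, L.getD k 0) = A := by
    have := congrArg Prod.fst hwteq.symm; simpa using this
  have ha : ((2:ℝ)⁻¹ • ∑ k ∈ Finset.range L.length, ∑ j ∈ Finset.range k,
      ω (L.getD j 0) (L.getD k 0)) = a := by
    have := congrArg Prod.snd hwteq.symm; simpa using this
  rw [hA, ha, sum_getD_norm] at hword
  refine le_trans hword ?_
  have hb1 : Mf * (L.length : ℝ) = Mf * (1 + 4*n) := by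
    rw [hLlen]; push_cast; ring
  rw [hb1]
  have hfinal : (L.map norm).sum ≤ max 1 c1 * (‖A‖ + Real.sqrt ‖a‖) := by
    refine le_trans hnorm ?_
    have h1 : ‖A‖ ≤ max 1 c1 * ‖A‖ := le_mul_of_one_le_left (norm_nonneg _) (le_max_left _ _)
    have h2 : c1 * Real.sqrt ‖a‖ ≤ max 1 c1 * Real.sqrt ‖a‖ :=
      mul_le_mul_of_nonneg_right (le_max_right _ _) (Real.sqrt_nonneg _)
    calc ‖A‖ + c1 * Real.sqrt ‖a‖ ≤ max 1 c1 * ‖A‖ + max 1 c1 * Real.sqrt ‖a‖ := add_le_add h1 h2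
      _ = max 1 c1 * (‖A‖ + Real.sqrt ‖a‖) := by ring
  calc Mf * (1 + 4*(n:ℝ)) * (L.map norm).sum
      ≤ Mf * (1 + 4*(n:ℝ)) * (max 1 c1 * (‖A‖ + Real.sqrt ‖a‖)) := by
        apply mul_le_mul_of_nonneg_left hfinal
        have := Mf_nonneg
        positivity
    _ = Mf * (1 + 4*(n:ℝ)) * max 1 c1 * (‖A‖ + Real.sqrt ‖a‖) := by ring
end

section
/- Assume ω is total, i.e. the linear span of {ω(A,B) : A,B ∈ H} equals 𝐂. Then for every ε₀ > 0 there exists γ(ε₀) > 0 such that for every (A,a) ∈ 𝔤_CM with d(e,(A,a)) ≥ ε₀ one has γ(ε₀) (‖A‖_H + sqrt(‖a‖_𝐂)) ≤ d(e,(A,a)). -/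
open MeasureTheory

lemma pathLen_nonneg {H C : Type*} [NormedAddCommGroup H] [InnerProductSpace ℝ H]
    [NormedAddCommGroup C] [InnerProductSpace ℝ C]
    (ω : H →L[ℝ] H →L[ℝ] C) (w : ℝ → H) (c : ℝ → C) : 0 ≤ pathLen ω w c :=
  intervalIntegral.integral_nonneg (by norm_num) fun u _ => Real.sqrt_nonneg _

/-- Key estimate: for a `C¹` path starting at the identity,
`‖w 1‖ ≤ ℓ` and `‖c 1‖ ≤ ℓ + ‖ω‖/2 · ℓ²` where `ℓ` is the path length. -/
lemma key_estimate {H C : Type*} [NormedAddCommGroup H] [InnerProductSpace ℝ H]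
    [NormedAddCommGroup C] [InnerProductSpace ℝ C]
    (ω : H →L[ℝ] H →L[ℝ] C) (w : ℝ → H) (c : ℝ → C)
    (hw : ContDiff ℝ 1 w) (hc : ContDiff ℝ 1 c) (hw0 : w 0 = 0) (hc0 : c 0 = 0) :
    ‖w 1‖ ≤ pathLen ω w c ∧
      ‖c 1‖ ≤ pathLen ω w c + ‖ω‖ / 2 * pathLen ω w c ^ 2 := by
  set L := pathLen ω w c with hLdef
  have hwc : Continuous w := hw.continuous
  have hw' : Continuous (deriv w) := hw.continuous_deriv le_rfl
  have hc' : Continuous (deriv c) := hc.continuous_deriv le_rfl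
  set g : ℝ → C := fun s => deriv c s - (2:ℝ)⁻¹ • ω (w s) (deriv w s) with hg
  have hgc : Continuous g := by fun_prop
  set F : ℝ → ℝ := fun s => Real.sqrt (‖deriv w s‖ ^ 2 + ‖g s‖ ^ 2) with hF
  have hFc : Continuous F := by fun_prop
  have hLF : L = ∫ s in (0:ℝ)..1, F s := rfl
  -- the two coordinatewise integral bounds
  have hptw : ∀ s : ℝ, ‖deriv w s‖ ≤ F s := by
    intro s
    rw [hF, ← Real.sqrt_sq (norm_nonneg (deriv w s))]
    exact Real.sqrt_le_sqrt (le_add_of_nonneg_right (sq_nonneg _))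
  have hptg : ∀ s : ℝ, ‖g s‖ ≤ F s := by
    intro s
    rw [hF, ← Real.sqrt_sq (norm_nonneg (g s))]
    exact Real.sqrt_le_sqrt (le_add_of_nonneg_left (sq_nonneg _))
  have h1 : (∫ s in (0:ℝ)..1, ‖deriv w s‖) ≤ L := by
    rw [hLF]
    exact intervalIntegral.integral_mono_on (by norm_num)
      (hw'.norm.intervalIntegrable _ _) (hFc.intervalIntegrable _ _)
      fun s _ => hptw s
  have h2 : (∫ s in (0:ℝ)..1, ‖g s‖) ≤ L := by
    rw [hLF]
    exact intervalIntegral.integral_mono_on (by norm_num)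
      (hgc.norm.intervalIntegrable _ _) (hFc.intervalIntegrable _ _)
      fun s _ => hptg s
  -- the running length of w
  set Φ : ℝ → ℝ := fun s => ∫ t in (0:ℝ)..s, ‖deriv w t‖ with hΦ
  have hΦd : ∀ s : ℝ, HasDerivAt Φ ‖deriv w s‖ s := fun s =>
    intervalIntegral.integral_hasDerivAt_right
      (hw'.norm.intervalIntegrable _ _)
      (hw'.norm.stronglyMeasurableAtFilter _ _) hw'.norm.continuousAt
  have hΦ0 : Φ 0 = 0 := intervalIntegral.integral_same
  have hΦ1 : Φ 1 ≤ L := h1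
  have hΦnonneg : 0 ≤ Φ 1 :=
    intervalIntegral.integral_nonneg (by norm_num) fun u _ => norm_nonneg _
  -- bound ‖w s‖ ≤ Φ s on [0,1]
  have hwb : ∀ s ∈ Set.Icc (0:ℝ) 1, ‖w s‖ ≤ Φ s := by
    intro s hs
    have := image_norm_le_of_norm_deriv_right_le_deriv_boundary
      (f := w) (f' := deriv w) (a := 0) (b := 1) hwc.continuousOn
      (fun x _ => ((hw.differentiable one_ne_zero x).hasDerivAt).hasDerivWithinAt)
      (by rw [hw0, hΦ0]; simp) hΦd (fun x _ => le_rfl)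
    exact (this hs)
  have hΦmono : ∀ s ∈ Set.Icc (0:ℝ) 1, Φ s ≤ Φ 1 := by
    intro s hs
    have hadd : Φ s + (∫ t in s..(1:ℝ), ‖deriv w t‖) = Φ 1 :=
      intervalIntegral.integral_add_adjacent_intervals
        (hw'.norm.intervalIntegrable _ _) (hw'.norm.intervalIntegrable _ _)
    have hpos : 0 ≤ ∫ t in s..(1:ℝ), ‖deriv w t‖ :=
      intervalIntegral.integral_nonneg hs.2 fun u _ => norm_nonneg _
    linarith
  constructor
  · exact le_trans (hwb 1 (by norm_num)) hΦ1
  -- now the estimate on c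
  · set k : ℝ := (2:ℝ)⁻¹ * ‖ω‖ * Φ 1 with hk
    have hknn : 0 ≤ k := by
      rw [hk]; positivity
    set b : ℝ → ℝ := fun s => ‖g s‖ + k * ‖deriv w s‖ with hb
    have hbc : Continuous b := by fun_prop
    set Ψ : ℝ → ℝ := fun s => ∫ t in (0:ℝ)..s, b t with hΨ
    have hΨd : ∀ s : ℝ, HasDerivAt Ψ (b s) s := fun s =>
      intervalIntegral.integral_hasDerivAt_right
        (hbc.intervalIntegrable _ _)
        (hbc.stronglyMeasurableAtFilter _ _) hbc.continuousAt
    have hΨ0 : Ψ 0 = 0 := intervalIntegral.integral_same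
    have bound : ∀ x ∈ Set.Ico (0:ℝ) 1, ‖deriv c x‖ ≤ b x := by
      intro x hx
      have hder : deriv c x = g x + (2:ℝ)⁻¹ • ω (w x) (deriv w x) := by
        rw [hg]; rw [sub_add_cancel]
      have h3 : ‖(2:ℝ)⁻¹ • ω (w x) (deriv w x)‖ ≤ k * ‖deriv w x‖ := by
        rw [norm_smul]
        have hop := ω.le_opNorm₂ (w x) (deriv w x)
        have hwx : ‖w x‖ ≤ Φ 1 :=
          le_trans (hwb x (Set.Ico_subset_Icc_self hx))
            (hΦmono x (Set.Ico_subset_Icc_self hx))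
        have h5 : ‖ω (w x) (deriv w x)‖ ≤ ‖ω‖ * Φ 1 * ‖deriv w x‖ := by
          have h6 := norm_nonneg (deriv w x)
          have h7 := norm_nonneg ω
          have h8 := mul_le_mul_of_nonneg_right
            (mul_le_mul_of_nonneg_left hwx h7) h6
          linarith
        have h4 : ‖(2:ℝ)⁻¹‖ = (2:ℝ)⁻¹ := by norm_num
        rw [h4, hk]
        nlinarith [norm_nonneg (ω (w x) (deriv w x))]
      calc ‖deriv c x‖ = ‖g x + (2:ℝ)⁻¹ • ω (w x) (deriv w x)‖ := by rw [← hder]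
        _ ≤ ‖g x‖ + ‖(2:ℝ)⁻¹ • ω (w x) (deriv w x)‖ := norm_add_le _ _
        _ ≤ b x := by rw [hb]; exact add_le_add le_rfl h3
    have hcb : ‖c 1‖ ≤ Ψ 1 := by
      have := image_norm_le_of_norm_deriv_right_le_deriv_boundary
        (f := c) (f' := deriv c) (a := 0) (b := 1) hc.continuous.continuousOn
        (fun x _ => ((hc.differentiable one_ne_zero x).hasDerivAt).hasDerivWithinAt)
        (by rw [hc0, hΨ0]; simp) hΨd bound
      exact this (by norm_num : (1:ℝ) ∈ Set.Icc (0:ℝ) 1)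
    have hΨ1 : Ψ 1 = (∫ s in (0:ℝ)..1, ‖g s‖) + k * Φ 1 := by
      rw [hΨ]
      simp only [hb]
      rw [intervalIntegral.integral_add (g := fun s => k * ‖deriv w s‖) (hgc.norm.intervalIntegrable _ _)
        ((continuous_const.mul hw'.norm).intervalIntegrable _ _),
        intervalIntegral.integral_const_mul]
    have hLnn : 0 ≤ L := pathLen_nonneg ω w c
    have : Ψ 1 ≤ L + ‖ω‖ / 2 * L ^ 2 := by
      rw [hΨ1, hk]
      have hωnn := norm_nonneg ω
      have hΦsq : ‖ω‖ / 2 * (Φ 1 * Φ 1) ≤ ‖ω‖ / 2 * L ^ 2 := by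
        have h9 : Φ 1 * Φ 1 ≤ L ^ 2 := by nlinarith [mul_le_mul hΦ1 hΦ1 hΦnonneg hLnn]
        exact mul_le_mul_of_nonneg_left h9 (by positivity)
      linarith
    linarith

/-- If `ω` is total, then for every `ε₀ > 0` there is `γ(ε₀) > 0` such that
`γ(ε₀) (‖A‖_H + √‖a‖_𝐂) ≤ d(e,(A,a))` whenever `d(e,(A,a)) ≥ ε₀`. -/
theorem dist_lower_bound_of_total
    {H C : Type*} [NormedAddCommGroup H] [InnerProductSpace ℝ H]
    [TopologicalSpace.SeparableSpace H]
    [NormedAddCommGroup C] [InnerProductSpace ℝ C] [FiniteDimensional ℝ C]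
    (ω : H →L[ℝ] H →L[ℝ] C)
    (hskew : ∀ A B : H, ω A B = - ω B A)
    (htotal : Submodule.span ℝ {c : C | ∃ A B : H, ω A B = c} = ⊤) :
    ∀ ε₀ : ℝ, 0 < ε₀ → ∃ γ : ℝ, 0 < γ ∧ ∀ (A : H) (a : C),
      ε₀ ≤ dCM ω ((0 : H), (0 : C)) (A, a) →
        γ * (‖A‖ + Real.sqrt ‖a‖) ≤ dCM ω ((0 : H), (0 : C)) (A, a) := by
  intro ε₀ hε₀
  set K : ℝ := ε₀⁻¹ + ‖ω‖ / 2 with hK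
  have hKpos : 0 < K := by positivity
  have hsK : 0 ≤ Real.sqrt K := Real.sqrt_nonneg K
  refine ⟨(1 + Real.sqrt K)⁻¹, by positivity, ?_⟩
  intro A a hd
  set S : Set ℝ := {L : ℝ | ∃ w : ℝ → H, ∃ c : ℝ → C, ContDiff ℝ 1 w ∧ ContDiff ℝ 1 c ∧
    w 0 = ((0:H),(0:C)).1 ∧ c 0 = ((0:H),(0:C)).2 ∧ w 1 = (A, a).1 ∧ c 1 = (A, a).2 ∧
    L = pathLen ω w c} with hS
  have hdCM : dCM ω ((0 : H), (0 : C)) (A, a) = sInf S := rfl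
  have hSne : S.Nonempty := by
    refine ⟨pathLen ω (fun s => s • A) (fun s => s • a),
      fun s => s • A, fun s => s • a,
      contDiff_id.smul contDiff_const, contDiff_id.smul contDiff_const, ?_, ?_, ?_, ?_, rfl⟩
    · simp
    · simp
    · simp
    · simp
  have hbdd : BddBelow S := by
    refine ⟨0, fun L hL => ?_⟩
    obtain ⟨w, c, _, _, _, _, _, _, rfl⟩ := hL
    exact pathLen_nonneg ω w c
  rw [hdCM]
  apply le_csInf hSne
  intro L hL
  obtain ⟨w, c, hw, hc, hw0, hc0, hw1, hc1, rfl⟩ := hL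
  set ℓ := pathLen ω w c with hℓ
  have hεℓ : ε₀ ≤ ℓ := by
    refine le_trans hd ?_
    rw [hdCM]
    exact csInf_le hbdd ⟨w, c, hw, hc, hw0, hc0, hw1, hc1, rfl⟩
  have hℓpos : 0 < ℓ := lt_of_lt_of_le hε₀ hεℓ
  obtain ⟨hA0, ha0⟩ := key_estimate ω w c hw hc hw0 hc0
  rw [hw1] at hA0
  rw [hc1] at ha0
  have hA : ‖A‖ ≤ ℓ := hA0
  have ha : ‖a‖ ≤ ℓ + ‖ω‖ / 2 * ℓ ^ 2 := ha0
  -- ‖a‖ ≤ K ℓ²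
  have haK : ‖a‖ ≤ K * ℓ ^ 2 := by
    have h1 : ℓ ≤ ℓ ^ 2 / ε₀ := by
      rw [le_div_iff₀ hε₀]
      nlinarith
    have h2 : ℓ + ‖ω‖ / 2 * ℓ ^ 2 ≤ K * ℓ ^ 2 := by
      rw [hK]
      have : ℓ ^ 2 / ε₀ = ε₀⁻¹ * ℓ ^ 2 := by ring
      nlinarith
    exact ha.trans h2
  have hsa : Real.sqrt ‖a‖ ≤ Real.sqrt K * ℓ := by
    calc Real.sqrt ‖a‖ ≤ Real.sqrt (K * ℓ ^ 2) := Real.sqrt_le_sqrt haK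
      _ = Real.sqrt K * ℓ := by
          rw [Real.sqrt_mul hKpos.le, Real.sqrt_sq hℓpos.le]
  rw [inv_mul_le_iff₀ (by positivity)]
  nlinarith
end

section
/- For all x, y ∈ 𝔤_CM one has d(x,y) ≤ (1 + (C(ω)/2) · min(‖x‖, ‖y‖)) · ‖y − x‖; in particular d(e,x) ≤ ‖x‖ for every x ∈ 𝔤_CM. -/
open MeasureTheory

/-- The Hilbert norm `‖(A,a)‖ = √(‖A‖² + ‖a‖²)` on `𝔤_CM = H × 𝐂`. -/
noncomputable def gNorm {H C : Type*} [NormedAddCommGroup H] [NormedAddCommGroup C]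
    (p : H × C) : ℝ :=
  Real.sqrt (‖p.1‖ ^ 2 + ‖p.2‖ ^ 2)

lemma aux_sqrt (a b v d : ℝ) (hb : 0 ≤ b) (hv : 0 ≤ v) (hd0 : 0 ≤ d) (hd : d ≤ b + v) :
    Real.sqrt (a ^ 2 + d ^ 2) ≤ Real.sqrt (a ^ 2 + b ^ 2) + v := by
  set s := Real.sqrt (a ^ 2 + b ^ 2) with hs_def
  have hs : 0 ≤ s := Real.sqrt_nonneg _
  have hbs : b ≤ s := by
    rw [show b = Real.sqrt (b ^ 2) from (Real.sqrt_sq hb).symm]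
    exact Real.sqrt_le_sqrt (by nlinarith)
  have hs2 : s ^ 2 = a ^ 2 + b ^ 2 := Real.sq_sqrt (by positivity)
  calc Real.sqrt (a ^ 2 + d ^ 2) ≤ Real.sqrt ((s + v) ^ 2) :=
        Real.sqrt_le_sqrt (by nlinarith)
    _ = s + v := Real.sqrt_sq (by linarith)

lemma aux_le_sqrt (a b : ℝ) (ha : 0 ≤ a) : a ≤ Real.sqrt (a ^ 2 + b ^ 2) := by
  have h := Real.sqrt_le_sqrt (show a ^ 2 ≤ a ^ 2 + b ^ 2 by nlinarith [sq_nonneg b])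
  rwa [Real.sqrt_sq ha] at h


set_option maxHeartbeats 1000000 in
/-- `d(x,y) ≤ (1 + (C(ω)/2) min(‖x‖,‖y‖)) ‖y − x‖`; in particular `d(e,x) ≤ ‖x‖`. -/
theorem dist_le_norm_bound
    {H C : Type*} [NormedAddCommGroup H] [InnerProductSpace ℝ H]
    [TopologicalSpace.SeparableSpace H]
    [NormedAddCommGroup C] [InnerProductSpace ℝ C] [FiniteDimensional ℝ C]
    (ω : H →L[ℝ] H →L[ℝ] C)
    (hskew : ∀ A B : H, ω A B = - ω B A) :
    (∀ x y : H × C,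
      dCM ω x y ≤ (1 + ‖ω‖ / 2 * min (gNorm x) (gNorm y)) * gNorm (y - x)) ∧
    (∀ x : H × C, dCM ω (0 : H × C) x ≤ gNorm x) := by
  have main : ∀ x y : H × C,
      dCM ω x y ≤ (1 + ‖ω‖ / 2 * min (gNorm x) (gNorm y)) * gNorm (y - x) := by
    intro x y
    set B := y.1 - x.1 with hB
    set b := y.2 - x.2 with hb
    set w : ℝ → H := fun s => x.1 + s • B with hw_def
    set c : ℝ → C := fun s => x.2 + s • b with hc_def
    have hw : ∀ s : ℝ, HasDerivAt w B s := fun s => by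
      simpa [hw_def] using ((hasDerivAt_id s).smul_const B).const_add x.1
    have hc : ∀ s : ℝ, HasDerivAt c b s := fun s => by
      simpa [hc_def] using ((hasDerivAt_id s).smul_const b).const_add x.2
    have hdw : deriv w = fun _ => B := funext fun s => (hw s).deriv
    have hdc : deriv c = fun _ => b := funext fun s => (hc s).deriv
    have hωBB : ω B B = 0 := by
      have h2 : (2 : ℝ) • ω B B = 0 := by
        rw [two_smul]; nth_rewrite 1 [hskew]; simp
      simpa using (smul_eq_zero.mp h2).resolve_left (by norm_num)
    set K := Real.sqrt (‖B‖ ^ 2 + ‖b - (2:ℝ)⁻¹ • ω x.1 B‖ ^ 2) with hK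
    have hlen : pathLen ω w c = K := by
      rw [pathLen]
      rw [intervalIntegral.integral_congr (g := fun _ : ℝ => K)
        (fun s _ => by
          rw [hdw, hdc]
          have : ω (w s) B = ω x.1 B := by
            simp only [hw_def, map_add, _root_.map_smul, ContinuousLinearMap.add_apply,
              ContinuousLinearMap.smul_apply, hωBB, smul_zero, add_zero, smul_zero]
          rw [this])]
      simp
    have hbdd : BddBelow {L : ℝ | ∃ w : ℝ → H, ∃ c : ℝ → C, ContDiff ℝ 1 w ∧ ContDiff ℝ 1 c ∧
        w 0 = x.1 ∧ c 0 = x.2 ∧ w 1 = y.1 ∧ c 1 = y.2 ∧ L = pathLen ω w c} := by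
      refine ⟨0, fun L hL => ?_⟩
      obtain ⟨w, c, _, _, _, _, _, _, rfl⟩ := hL
      exact intervalIntegral.integral_nonneg (by norm_num) fun s _ => Real.sqrt_nonneg _
    have hmem : pathLen ω w c ∈ {L : ℝ | ∃ w : ℝ → H, ∃ c : ℝ → C, ContDiff ℝ 1 w ∧
        ContDiff ℝ 1 c ∧ w 0 = x.1 ∧ c 0 = x.2 ∧ w 1 = y.1 ∧ c 1 = y.2 ∧
        L = pathLen ω w c} := by
      refine ⟨w, c, ?_, ?_, by simp [hw_def], by simp [hc_def], ?_, ?_, rfl⟩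
      · exact contDiff_const.add (contDiff_id.smul contDiff_const)
      · exact contDiff_const.add (contDiff_id.smul contDiff_const)
      · simp [hw_def, hB]
      · simp [hc_def, hb]
    have hle : dCM ω x y ≤ K := hlen ▸ csInf_le hbdd hmem
    -- now bound K
    set m := min (gNorm x) (gNorm y) with hm
    have hm0 : 0 ≤ m := le_min (Real.sqrt_nonneg _) (Real.sqrt_nonneg _)
    set g := gNorm (y - x) with hg
    have hg0 : 0 ≤ g := Real.sqrt_nonneg _
    have hgeq : g = Real.sqrt (‖B‖ ^ 2 + ‖b‖ ^ 2) := by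
      simp [hg, gNorm, hB, hb]
    have hBg : ‖B‖ ≤ g := by
      rw [hgeq]; exact aux_le_sqrt _ _ (norm_nonneg _)
    have hx1 : ‖x.1‖ ≤ gNorm x := aux_le_sqrt _ _ (norm_nonneg _)
    have hy1 : ‖y.1‖ ≤ gNorm y := aux_le_sqrt _ _ (norm_nonneg _)
    have hωeq : ω x.1 B = ω y.1 B := by
      have hxB : x.1 + B = y.1 := by rw [hB]; abel
      rw [← hxB, map_add, ContinuousLinearMap.add_apply, hωBB, add_zero]
    have hωb : ‖ω x.1 B‖ ≤ ‖ω‖ * m * ‖B‖ := by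
      rcases min_cases (gNorm x) (gNorm y) with ⟨h1, _⟩ | ⟨h1, _⟩
      · rw [hm, h1]
        calc ‖ω x.1 B‖ ≤ ‖ω‖ * ‖x.1‖ * ‖B‖ := ω.le_opNorm₂ x.1 B
          _ ≤ ‖ω‖ * gNorm x * ‖B‖ := by gcongr
      · rw [hm, h1]
        rw [hωeq]
        calc ‖ω y.1 B‖ ≤ ‖ω‖ * ‖y.1‖ * ‖B‖ := ω.le_opNorm₂ y.1 B
          _ ≤ ‖ω‖ * gNorm y * ‖B‖ := by gcongr
    set v := ‖(2:ℝ)⁻¹ • ω x.1 B‖ with hv_def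
    have hv0 : 0 ≤ v := norm_nonneg _
    have hKle : K ≤ Real.sqrt (‖B‖ ^ 2 + ‖b‖ ^ 2) + v :=
      aux_sqrt _ _ _ _ (norm_nonneg _) hv0 (norm_nonneg _) (norm_sub_le _ _)
    have hveq : v = 2⁻¹ * ‖ω x.1 B‖ := by
      rw [hv_def, norm_smul]; norm_num
    have hvle : v ≤ ‖ω‖ / 2 * m * g := by
      rw [hveq]
      have h1 : ‖ω x.1 B‖ ≤ ‖ω‖ * m * g := by
        have := norm_nonneg ω
        calc ‖ω x.1 B‖ ≤ ‖ω‖ * m * ‖B‖ := hωb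
          _ ≤ ‖ω‖ * m * g := mul_le_mul_of_nonneg_left hBg (mul_nonneg (norm_nonneg ω) hm0)
      linarith
    calc dCM ω x y ≤ K := hle
      _ ≤ Real.sqrt (‖B‖ ^ 2 + ‖b‖ ^ 2) + v := hKle
      _ = g + v := by rw [hgeq]
      _ ≤ g + ‖ω‖ / 2 * m * g := by linarith
      _ = (1 + ‖ω‖ / 2 * m) * g := by ring
  refine ⟨main, fun x => ?_⟩
  have h := main 0 x
  have h0 : gNorm (0 : H × C) = 0 := by simp [gNorm]
  rw [h0, min_eq_left (show (0:ℝ) ≤ gNorm x from Real.sqrt_nonneg _), sub_zero] at h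
  simpa using h
end

section
/- Let K denote the closure of X* (viewed as a subspace of functions on X) in L²(X,μ;ℝ). For every f ∈ K the Bochner integral ιf := ∫_X x f(x) dμ(x) exists in X, the element ιf belongs to H with ‖ιf‖_H = ‖f‖_{L²(μ)}, and the map ι : K → H is a bijection onto H; consequently ‖·‖_H is a Hilbertian norm and (H, ‖·‖_H) is a separable Hilbert space. -/
open MeasureTheory

open MeasureTheory Filter Topology RealInnerProductSpace

section CMAux

variable {X : Type*} [NormedAddCommGroup X] [NormedSpace ℝ X]
  [TopologicalSpace.SeparableSpace X] [MeasurableSpace X] [BorelSpace X]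
  {μ : Measure X} [IsProbabilityMeasure μ]

set_option linter.unusedSectionVars false

lemma cm_int_smul (hC2 : Integrable (fun x => ‖x‖ ^ 2) μ) (f : Lp ℝ 2 μ) :
    Integrable (fun x => (f : X → ℝ) x • x) μ := by
  have hf2 : Integrable (fun x => (f : X → ℝ) x ^ 2) μ := (Lp.memLp f).integrable_sq
  haveI : SecondCountableTopology X := UniformSpace.secondCountable_of_separable X
  have hmeas : AEStronglyMeasurable (fun x => (f : X → ℝ) x • x) μ :=
    (Lp.aestronglyMeasurable f).smul aestronglyMeasurable_id
  refine ((hf2.add hC2).div_const 2).mono' hmeas ?_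
  filter_upwards with x
  simp only [Pi.add_apply]
  rw [norm_smul, Real.norm_eq_abs]
  nlinarith [sq_nonneg (|(f : X → ℝ) x| - ‖x‖), sq_abs ((f : X → ℝ) x),
    abs_nonneg ((f : X → ℝ) x), norm_nonneg x]

lemma cm_one_sub_cos_eq (b : ℝ) : 1 - Real.cos b = 2 * Real.sin (b / 2) ^ 2 := by
  have h2 := Real.sin_sq_eq_half_sub (b / 2)
  rw [show 2 * (b / 2) = b by ring] at h2
  linarith

lemma cm_one_sub_cos_le (b : ℝ) : 1 - Real.cos b ≤ b ^ 2 / 2 := by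
  rcases eq_or_ne b 0 with rfl | hb
  · simp
  · linarith [Real.one_sub_sq_div_two_lt_cos hb]

lemma cm_tendsto_sin_div : Tendsto (fun y : ℝ => Real.sin y / y) (nhdsWithin (0:ℝ) {(0:ℝ)}ᶜ) (nhds 1) := by
  have h : HasDerivAt Real.sin 1 0 := by simpa using Real.hasDerivAt_sin 0
  have h2 := hasDerivAt_iff_tendsto_slope.mp h
  exact h2.congr fun y => by simp [slope_def_field]

lemma cm_tendsto_exp_div :
    Tendsto (fun s : ℝ => (1 - Real.exp (-s)) / s) (nhdsWithin (0:ℝ) {(0:ℝ)}ᶜ) (nhds 1) := by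
  have h : HasDerivAt (fun s : ℝ => Real.exp (-s)) (-1) 0 := by
    simpa [Function.comp_def] using (Real.hasDerivAt_exp (-0)).comp 0 (hasDerivAt_neg (0:ℝ))
  have h1 : HasDerivAt (fun s : ℝ => -Real.exp (-s)) 1 0 := by simpa [Pi.neg_def] using h.neg
  have h2 := hasDerivAt_iff_tendsto_slope.mp h1
  refine h2.congr fun y => ?_
  simp [slope_def_field]
  ring


lemma cm_cos_char (q : (X →L[ℝ] ℝ) → (X →L[ℝ] ℝ) → ℝ)
    (hq_symm : ∀ u v : X →L[ℝ] ℝ, q u v = q v u)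
    (hq_smul : ∀ (r : ℝ) (u v : X →L[ℝ] ℝ), q (r • u) v = r * q u v)
    (hchar : ∀ u : X →L[ℝ] ℝ,
      (∫ x, Complex.exp (Complex.I * (u x : ℂ)) ∂μ) = Complex.exp (-(q u u : ℂ) / 2))
    (u : X →L[ℝ] ℝ) (t : ℝ) :
    ∫ x, Real.cos (t * u x) ∂μ = Real.exp (-(t ^ 2 * q u u) / 2) := by
  have hq : q (t • u) (t • u) = t ^ 2 * q u u := by
    rw [hq_smul, hq_symm, hq_smul, hq_symm]; ring
  have h := hchar (t • u)
  rw [hq] at h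
  have hint : Integrable (fun x => Complex.exp (Complex.I * (((t • u) x : ℝ) : ℂ))) μ := by
    refine (integrable_const (1:ℝ)).mono' ?_ ?_
    · exact (Complex.continuous_exp.comp
        (continuous_const.mul (Complex.continuous_ofReal.comp (t • u).continuous))).aestronglyMeasurable
    · filter_upwards with x
      rw [mul_comm, Complex.norm_exp_ofReal_mul_I]
  have hre := integral_re hint
  calc ∫ x, Real.cos (t * u x) ∂μ
      = ∫ x, (Complex.exp (Complex.I * (((t • u) x : ℝ) : ℂ))).re ∂μ := by
        refine integral_congr_ae (ae_of_all _ fun x => ?_)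
        show Real.cos (t * u x) = (Complex.exp (Complex.I * (((t • u) x : ℝ) : ℂ))).re
        rw [mul_comm Complex.I, Complex.exp_ofReal_mul_I_re,
          ContinuousLinearMap.smul_apply, smul_eq_mul]
    _ = (∫ x, Complex.exp (Complex.I * (((t • u) x : ℝ) : ℂ)) ∂μ).re := by
        simpa using hre
    _ = (Complex.exp (-((t ^ 2 * q u u : ℝ) : ℂ) / 2)).re := by rw [h]
    _ = Real.exp (-(t ^ 2 * q u u) / 2) := by
        rw [show (-((t ^ 2 * q u u : ℝ) : ℂ) / 2) = ((-(t ^ 2 * q u u) / 2 : ℝ) : ℂ) by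
          push_cast; ring, ← Complex.ofReal_exp, Complex.ofReal_re]


lemma cm_var (q : (X →L[ℝ] ℝ) → (X →L[ℝ] ℝ) → ℝ)
    (hq_symm : ∀ u v : X →L[ℝ] ℝ, q u v = q v u)
    (hq_smul : ∀ (r : ℝ) (u v : X →L[ℝ] ℝ), q (r • u) v = r * q u v)
    (hq_pos : ∀ u : X →L[ℝ] ℝ, u ≠ 0 → 0 < q u u)
    (hchar : ∀ u : X →L[ℝ] ℝ,
      (∫ x, Complex.exp (Complex.I * (u x : ℂ)) ∂μ) = Complex.exp (-(q u u : ℂ) / 2))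
    (hu2 : ∀ u : X →L[ℝ] ℝ, MemLp (fun x => u x) 2 μ)
    (u : X →L[ℝ] ℝ) :
    ∫ x, (u x) ^ 2 ∂μ = q u u := by
  rcases eq_or_ne u 0 with rfl | hu
  · have h0 : q 0 0 = 0 := by
      have := hq_smul 0 0 0
      simpa using this
    simp [h0]
  · set σ := q u u with hσdef
    have hσ : 0 < σ := hq_pos u hu
    set t : ℕ → ℝ := fun n => 1 / ((n : ℝ) + 1) with ht
    have htpos : ∀ n, 0 < t n := fun n => by positivity
    have ht0 : Tendsto t atTop (nhds 0) := tendsto_one_div_add_atTop_nhds_zero_nat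
    have husq : Integrable (fun x => (u x) ^ 2 / 2) μ := ((hu2 u).integrable_sq).div_const 2
    set F : ℕ → X → ℝ := fun n x => (1 - Real.cos (t n * u x)) / (t n) ^ 2 with hF
    have hFbound : ∀ n x, ‖F n x‖ ≤ (u x) ^ 2 / 2 := by
      intro n x
      have h1 : 0 ≤ 1 - Real.cos (t n * u x) := by nlinarith [Real.cos_le_one (t n * u x)]
      have h2 : 1 - Real.cos (t n * u x) ≤ (t n * u x) ^ 2 / 2 := cm_one_sub_cos_le _
      have h3 : (0:ℝ) < (t n) ^ 2 := by positivity
      rw [Real.norm_eq_abs, hF, abs_of_nonneg (by positivity)]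
      rw [div_le_iff₀ h3]
      nlinarith [h2]
    have hFmeas : ∀ n, AEStronglyMeasurable (F n) μ := fun n =>
      ((continuous_const.sub
        (Real.continuous_cos.comp (continuous_const.mul u.continuous))).div_const
        _).aestronglyMeasurable
    have hFlim : ∀ x, Tendsto (fun n => F n x) atTop (nhds ((u x) ^ 2 / 2)) := by
      intro x
      rcases eq_or_ne (u x) 0 with h0 | h0
      · have he : (fun n => F n x) = fun _ => (0:ℝ) := by
          funext n; simp [hF, h0]
        rw [he, show (u x) ^ 2 / 2 = 0 by rw [h0]; ring]
        exact tendsto_const_nhds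
      · have hy : Tendsto (fun n => t n * u x / 2) atTop (nhdsWithin (0:ℝ) {(0:ℝ)}ᶜ) := by
          apply tendsto_nhdsWithin_of_tendsto_nhds_of_eventually_within
          · have h := (ht0.mul_const (u x)).div_const 2
            simp only [zero_mul, zero_div] at h
            exact h
          · filter_upwards with n
            exact div_ne_zero (mul_ne_zero (htpos n).ne' h0) two_ne_zero
        have hsin := cm_tendsto_sin_div.comp hy
        have h1 : Tendsto (fun n => (Real.sin (t n * u x / 2) / (t n * u x / 2)) ^ 2)
            atTop (nhds 1) := by
          have h := hsin.pow 2
          simp only [Function.comp_def, one_pow] at h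
          exact h
        have h2 : Tendsto (fun n =>
            (u x) ^ 2 / 2 * (Real.sin (t n * u x / 2) / (t n * u x / 2)) ^ 2)
            atTop (nhds ((u x) ^ 2 / 2)) := by
          have h := h1.const_mul ((u x) ^ 2 / 2)
          simp only [mul_one] at h
          exact h
        refine h2.congr fun n => ?_
        rw [hF]
        show (u x) ^ 2 / 2 * (Real.sin (t n * u x / 2) / (t n * u x / 2)) ^ 2
          = (1 - Real.cos (t n * u x)) / (t n) ^ 2
        rw [cm_one_sub_cos_eq (t n * u x)]
        have htn := (htpos n).ne'
        field_simp
    have hDCT : Tendsto (fun n => ∫ x, F n x ∂μ) atTop (nhds (∫ x, (u x) ^ 2 / 2 ∂μ)) :=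
      tendsto_integral_of_dominated_convergence _ hFmeas husq
        (fun n => ae_of_all _ fun x => hFbound n x) (ae_of_all _ hFlim)
    have hcos_int : ∀ (c : ℝ), Integrable (fun x => Real.cos (c * u x)) μ := fun c =>
      (integrable_const 1).mono'
        ((Real.continuous_cos.comp (continuous_const.mul u.continuous)).aestronglyMeasurable)
        (ae_of_all _ fun x => by rw [Real.norm_eq_abs]; exact Real.abs_cos_le_one _)
    have hFeq : ∀ n, ∫ x, F n x ∂μ = (1 - Real.exp (-((t n) ^ 2 * σ) / 2)) / (t n) ^ 2 := by
      intro n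
      rw [hF]
      show ∫ x, (1 - Real.cos (t n * u x)) / (t n) ^ 2 ∂μ = _
      rw [integral_div, integral_sub (integrable_const 1) (hcos_int (t n)),
        integral_const]
      simp only [measure_univ, probReal_univ, smul_eq_mul, one_mul]
      rw [cm_cos_char q hq_symm hq_smul hchar u (t n)]
    have hsn : Tendsto (fun n => (t n) ^ 2 * σ / 2) atTop (nhdsWithin (0:ℝ) {(0:ℝ)}ᶜ) := by
      apply tendsto_nhdsWithin_of_tendsto_nhds_of_eventually_within
      · have h2 := ht0.mul ht0
        simp only [mul_zero] at h2
        have h2' : Tendsto (fun n => (t n) ^ 2) atTop (nhds 0) := by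
          simp only [pow_two]
          exact h2
        have h := (h2'.mul_const σ).div_const 2
        simp only [zero_mul, zero_div] at h
        exact h
      · filter_upwards with n
        exact (div_pos (mul_pos (pow_pos (htpos n) 2) hσ) two_pos).ne'
    have hG : Tendsto (fun n => (1 - Real.exp (-((t n) ^ 2 * σ) / 2)) / (t n) ^ 2)
        atTop (nhds (σ / 2)) := by
      have h1 := cm_tendsto_exp_div.comp hsn
      have h2 : Tendsto (fun n =>
          σ / 2 * ((1 - Real.exp (-((t n) ^ 2 * σ / 2))) / ((t n) ^ 2 * σ / 2)))
          atTop (nhds (σ / 2)) := by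
        have h := h1.const_mul (σ / 2)
        simp only [Function.comp_def, mul_one] at h
        exact h
      refine h2.congr fun n => ?_
      rw [show -((t n) ^ 2 * σ / 2) = -((t n) ^ 2 * σ) / 2 by ring]
      have htn := (htpos n).ne'
      field_simp
    have h2 : Tendsto (fun n => ∫ x, F n x ∂μ) atTop (nhds (σ / 2)) :=
      hG.congr fun n => (hFeq n).symm
    have h3 : ∫ x, (u x) ^ 2 / 2 ∂μ = σ / 2 := tendsto_nhds_unique hDCT h2
    rw [integral_div] at h3
    linarith

end CMAux

/-- The set `{|u(x)| / √q(u,u) : u ∈ X*, u ≠ 0}` whose supremum is the Cameron–Martin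
norm `‖x‖_H`;  `x ∈ H` iff this set is bounded above, and then `‖x‖_H = sSup (cmSet q x)`. -/
def cmSet {X : Type*} [NormedAddCommGroup X] [NormedSpace ℝ X]
    (q : (X →L[ℝ] ℝ) → (X →L[ℝ] ℝ) → ℝ) (x : X) : Set ℝ :=
  {r : ℝ | ∃ u : X →L[ℝ] ℝ, u ≠ 0 ∧ r = |u x| / Real.sqrt (q u u)}

/-- The Cameron–Martin norm `‖x‖_H` (for `x ∈ H`, i.e. when `cmSet q x` is bounded above). -/
noncomputable def cmNorm {X : Type*} [NormedAddCommGroup X] [NormedSpace ℝ X]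
    (q : (X →L[ℝ] ℝ) → (X →L[ℝ] ℝ) → ℝ) (x : X) : ℝ :=
  sSup (cmSet q x)

set_option maxHeartbeats 1000000 in
/-- Let `K` be the closure of `X*` in `L²(X,μ;ℝ)`.  For every `f ∈ K` the Bochner integral
`ιf = ∫ x f(x) dμ(x)` exists in `X`, `ιf ∈ H` with `‖ιf‖_H = ‖f‖_{L²(μ)}`, and
`ι : K → H` is a bijection onto `H`.  Consequently `‖·‖_H` satisfies the parallelogram law
(it is a Hilbertian norm) and `(H,‖·‖_H)` is a separable (countably dense) complete space. -/
theorem cameronMartin_isometry_of_L2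
    {X : Type*} [NormedAddCommGroup X] [NormedSpace ℝ X] [CompleteSpace X]
    [TopologicalSpace.SeparableSpace X] [MeasurableSpace X] [BorelSpace X]
    (μ : Measure X) [IsProbabilityMeasure μ]
    (q : (X →L[ℝ] ℝ) → (X →L[ℝ] ℝ) → ℝ)
    (hq_symm : ∀ u v : X →L[ℝ] ℝ, q u v = q v u)
    (hq_add : ∀ u v w : X →L[ℝ] ℝ, q (u + v) w = q u w + q v w)
    (hq_smul : ∀ (r : ℝ) (u v : X →L[ℝ] ℝ), q (r • u) v = r * q u v)
    (hq_pos : ∀ u : X →L[ℝ] ℝ, u ≠ 0 → 0 < q u u)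
    (hchar : ∀ u : X →L[ℝ] ℝ,
      (∫ x, Complex.exp (Complex.I * (u x : ℂ)) ∂μ) = Complex.exp (-(q u u : ℂ) / 2))
    (hC2 : Integrable (fun x => ‖x‖ ^ 2) μ)
    (hu2 : ∀ u : X →L[ℝ] ℝ, MemLp (fun x => u x) 2 μ) :
    -- `K` is the closure of `X*` in `L²(μ)` and `ι f = ∫ x f(x) dμ(x)`:
    ∀ K : Set (Lp ℝ 2 μ),
      K = closure (Set.range fun u : X →L[ℝ] ℝ => (hu2 u).toLp (fun x => u x)) →
      ∀ ι : Lp ℝ 2 μ → X, (ι = fun f => ∫ x, f x • x ∂μ) →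
      -- the Bochner integral defining `ι f` exists and `ι f ∈ H` isometrically:
      (∀ f ∈ K, Integrable (fun x => f x • x) μ ∧
        BddAbove (cmSet q (ι f)) ∧ cmNorm q (ι f) = ‖f‖) ∧
      -- `ι : K → H` is a bijection onto `H`:
      Set.BijOn ι K {x : X | BddAbove (cmSet q x)} ∧
      -- `‖·‖_H` is Hilbertian (parallelogram law on `H`):
      (∀ x y : X, BddAbove (cmSet q x) → BddAbove (cmSet q y) →
        cmNorm q (x + y) ^ 2 + cmNorm q (x - y) ^ 2 =
          2 * cmNorm q x ^ 2 + 2 * cmNorm q y ^ 2) ∧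
      -- `(H, ‖·‖_H)` is separable:
      (∃ D : Set X, D.Countable ∧ (∀ x ∈ D, BddAbove (cmSet q x)) ∧
        ∀ x : X, BddAbove (cmSet q x) → ∀ ε : ℝ, 0 < ε →
          ∃ y ∈ D, cmNorm q (x - y) < ε) ∧
      -- `(H, ‖·‖_H)` is complete:
      (∀ s : ℕ → X, (∀ n, BddAbove (cmSet q (s n))) →
        (∀ ε : ℝ, 0 < ε → ∃ N : ℕ, ∀ m ≥ N, ∀ n ≥ N, cmNorm q (s m - s n) < ε) →
        ∃ x : X, BddAbove (cmSet q x) ∧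
          Filter.Tendsto (fun n => cmNorm q (s n - x)) Filter.atTop (nhds 0)) := by
  intro K hK ι hι
  classical
  haveI : SecondCountableTopology X := UniformSpace.secondCountable_of_separable X
  haveI : Fact ((2 : ENNReal) ≠ ⊤) := ⟨by norm_num⟩
  have hιf : ∀ f : Lp ℝ 2 μ, ι f = ∫ x, f x • x ∂μ := fun f => by rw [hι]
  have hint : ∀ f : Lp ℝ 2 μ, Integrable (fun x => f x • x) μ := cm_int_smul hC2
  have hvar : ∀ u : X →L[ℝ] ℝ, ∫ x, (u x) ^ 2 ∂μ = q u u :=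
    cm_var q hq_symm hq_smul hq_pos hchar hu2
  -- the linear map T : X* → L²
  let T : (X →L[ℝ] ℝ) →ₗ[ℝ] Lp ℝ 2 μ :=
    { toFun := fun u => (hu2 u).toLp (fun x => u x)
      map_add' := fun u v => by
        rw [← MemLp.toLp_add (hu2 u) (hu2 v)]
        exact MemLp.toLp_congr (hu2 (u + v)) ((hu2 u).add (hu2 v))
          (ae_of_all _ fun x => by simp)
      map_smul' := fun c u => by
        rw [RingHom.id_apply, ← MemLp.toLp_const_smul c (hu2 u)]
        exact MemLp.toLp_congr (hu2 (c • u)) ((hu2 u).const_smul c)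
          (ae_of_all _ fun x => by simp) }
  have hTa : ∀ u : X →L[ℝ] ℝ, (T u : X → ℝ) =ᵐ[μ] fun x => u x := fun u =>
    MemLp.coeFn_toLp (hu2 u)
  have hK' : K = closure (Set.range (T : (X →L[ℝ] ℝ) → Lp ℝ 2 μ)) := hK
  -- the closed subspace Ks with (Ks : Set) = K
  let Ks : Submodule ℝ (Lp ℝ 2 μ) := (LinearMap.range T).topologicalClosure
  have hKs : (Ks : Set (Lp ℝ 2 μ)) = K := by
    rw [hK', Submodule.topologicalClosure_coe, LinearMap.coe_range]
  have hKmem : ∀ f : Lp ℝ 2 μ, f ∈ K ↔ f ∈ Ks := fun f => by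
    rw [← hKs]; exact Iff.rfl
  have hTmem : ∀ u, T u ∈ Ks := fun u =>
    Submodule.le_topologicalClosure _ (LinearMap.mem_range_self T u)
  -- inner products
  have hinner : ∀ (u : X →L[ℝ] ℝ) (f : Lp ℝ 2 μ),
      ⟪T u, f⟫ = ∫ x, u x * (f : X → ℝ) x ∂μ := by
    intro u f
    rw [L2.inner_def]
    refine integral_congr_ae ?_
    filter_upwards [hTa u] with x hx
    rw [RCLike.inner_apply, conj_trivial, hx, mul_comm]
  have hTnormsq : ∀ u, ‖T u‖ ^ 2 = q u u := by
    intro u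
    rw [← real_inner_self_eq_norm_sq, hinner, ← hvar u]
    refine integral_congr_ae ?_
    filter_upwards [hTa u] with x hx
    rw [hx, sq]
  have hTnorm : ∀ u, ‖T u‖ = Real.sqrt (q u u) := fun u => by
    rw [← hTnormsq u, Real.sqrt_sq (norm_nonneg _)]
  have huι : ∀ (u : X →L[ℝ] ℝ) (f : Lp ℝ 2 μ), u (ι f) = ⟪T u, f⟫ := by
    intro u f
    rw [hιf f, ← ContinuousLinearMap.integral_comp_comm u (hint f), hinner u f]
    refine integral_congr_ae (ae_of_all _ fun x => ?_)
    simp [mul_comm]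
  -- upper bound for elements of cmSet
  have hbd : ∀ f : Lp ℝ 2 μ, ∀ r ∈ cmSet q (ι f), r ≤ ‖f‖ := by
    intro f r hr
    obtain ⟨u, hu0, rfl⟩ := hr
    rw [huι, ← hTnorm]
    have hT0 : 0 < ‖T u‖ := by
      rw [hTnorm]; exact Real.sqrt_pos.mpr (hq_pos u hu0)
    rw [div_le_iff₀ hT0]
    calc |⟪T u, f⟫| ≤ ‖T u‖ * ‖f‖ := abs_real_inner_le_norm _ _
      _ = ‖f‖ * ‖T u‖ := mul_comm _ _
  have hbdd : ∀ f : Lp ℝ 2 μ, BddAbove (cmSet q (ι f)) := fun f =>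
    ⟨‖f‖, fun r hr => hbd f r hr⟩
  -- the isometry
  have hiso : ∀ f : Lp ℝ 2 μ, f ∈ K → cmNorm q (ι f) = ‖f‖ := by
    intro f hf
    refine le_antisymm (Real.sSup_le (hbd f) (norm_nonneg f)) ?_
    rcases eq_or_lt_of_le (norm_nonneg f) with h0 | hpos
    · rw [← h0]
      rcases Set.eq_empty_or_nonempty (cmSet q (ι f)) with he | ⟨r, hr⟩
      · rw [cmNorm, he, Real.sSup_empty]
      · have hrle := le_csSup (hbdd f) hr
        have hr0 : 0 ≤ r := by
          obtain ⟨u, hu0, rfl⟩ := hr; positivity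
        exact le_trans hr0 hrle
    · by_contra hcon
      push_neg at hcon
      set ε : ℝ := (‖f‖ - cmNorm q (ι f)) / 2 with hεdef
      have hε : 0 < ε := by linarith
      set ε' := min (ε / 2) (‖f‖ / 2) with hε'def
      have hε'pos : 0 < ε' := lt_min (by linarith) (by linarith)
      have hε'le : ε' ≤ ε / 2 := min_le_left _ _
      have hε'lf : ε' ≤ ‖f‖ / 2 := min_le_right _ _
      have hfK : f ∈ closure (Set.range (T : (X →L[ℝ] ℝ) → Lp ℝ 2 μ)) := hK' ▸ hf
      rw [Metric.mem_closure_iff] at hfK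
      obtain ⟨b, hbmem, hdist⟩ := hfK ε' hε'pos
      obtain ⟨u, rfl⟩ := hbmem
      have hTuf : ‖f - T u‖ < ε' := by
        rw [← dist_eq_norm]; exact hdist
      have hu0 : u ≠ 0 := by
        rintro rfl
        rw [map_zero, sub_zero] at hTuf
        linarith
      have hT0 : 0 < ‖T u‖ := by
        rw [hTnorm]; exact Real.sqrt_pos.mpr (hq_pos u hu0)
      have hmem : |u (ι f)| / Real.sqrt (q u u) ∈ cmSet q (ι f) := ⟨u, hu0, rfl⟩
      have hle := le_csSup (hbdd f) hmem
      have hval : |u (ι f)| / Real.sqrt (q u u) = |⟪T u, f⟫| / ‖T u‖ := by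
        rw [huι, hTnorm]
      have hinlb : ‖f‖ ^ 2 - ε' * ‖f‖ ≤ ⟪T u, f⟫ := by
        have h1 : ⟪T u, f⟫ = ⟪f, f⟫ - ⟪f - T u, f⟫ := by
          rw [inner_sub_left]; ring
        have h2 := abs_le.mp (abs_real_inner_le_norm (f - T u) f)
        have h3 : ⟪f, f⟫ = ‖f‖ ^ 2 := real_inner_self_eq_norm_sq _
        have h4 : ‖f - T u‖ * ‖f‖ ≤ ε' * ‖f‖ :=
          mul_le_mul_of_nonneg_right hTuf.le (norm_nonneg f)
        rw [h1, h3]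
        linarith [h2.2]
      have hTub : ‖T u‖ ≤ ‖f‖ + ε' := by
        calc ‖T u‖ = ‖f - (f - T u)‖ := by congr 1; abel
          _ ≤ ‖f‖ + ‖f - T u‖ := norm_sub_le _ _
          _ ≤ ‖f‖ + ε' := by linarith
      have key : ‖f‖ - ε ≤ |⟪T u, f⟫| / ‖T u‖ := by
        rcases le_or_gt (‖f‖ - ε) 0 with hneg | hpos2
        · exact hneg.trans (by positivity)
        · rw [le_div_iff₀ hT0]
          have habs : ‖f‖ ^ 2 - ε' * ‖f‖ ≤ |⟪T u, f⟫| := le_trans hinlb (le_abs_self _)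
          nlinarith [mul_le_mul_of_nonneg_left hTub hpos2.le,
            mul_le_mul_of_nonneg_right hε'le (norm_nonneg f), mul_pos hε hε'pos]
      rw [← hval] at key
      have : cmNorm q (ι f) ≥ ‖f‖ - ε := le_trans key hle
      rw [hεdef] at this
      linarith
  -- linearity of ι
  have hadd : ∀ f g : Lp ℝ 2 μ, ι (f + g) = ι f + ι g := by
    intro f g
    rw [hιf, hιf, hιf, ← integral_add (hint f) (hint g)]
    refine integral_congr_ae ?_
    filter_upwards [Lp.coeFn_add f g] with x hx
    rw [hx, Pi.add_apply, add_smul]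
  have hsub : ∀ f g : Lp ℝ 2 μ, ι (f - g) = ι f - ι g := by
    intro f g
    rw [hιf, hιf, hιf, ← integral_sub (hint f) (hint g)]
    refine integral_congr_ae ?_
    filter_upwards [Lp.coeFn_sub f g] with x hx
    rw [hx, Pi.sub_apply, sub_smul]
  -- injectivity on K
  have hTinj : Function.Injective (T : (X →L[ℝ] ℝ) → Lp ℝ 2 μ) := by
    intro u v huv
    by_contra hne
    have hsub0 : u - v ≠ 0 := sub_ne_zero.mpr hne
    have h1 : ‖T (u - v)‖ ^ 2 = q (u - v) (u - v) := hTnormsq _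
    rw [map_sub, huv, sub_self] at h1
    simp only [norm_zero] at h1
    have := hq_pos _ hsub0
    rw [← h1] at this
    simpa using this
  have hinj : ∀ f ∈ K, ∀ g ∈ K, ι f = ι g → f = g := by
    intro f hf g hg hfg
    have h1 : ∀ u : X →L[ℝ] ℝ, ⟪T u, f - g⟫ = 0 := by
      intro u
      rw [inner_sub_right, ← huι u f, ← huι u g, hfg, sub_self]
    have h2 : ∀ y ∈ closure (Set.range (T : (X →L[ℝ] ℝ) → Lp ℝ 2 μ)), ⟪y, f - g⟫ = 0 := by
      have hcl : IsClosed {y : Lp ℝ 2 μ | ⟪y, f - g⟫ = 0} :=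
        isClosed_eq (Continuous.inner continuous_id continuous_const) continuous_const
      intro y hy
      refine closure_minimal ?_ hcl hy
      rintro z ⟨u, rfl⟩
      exact h1 u
    have h3 : ⟪f - g, f - g⟫ = 0 := by
      apply h2
      rw [← hK']
      rw [hKmem]
      exact Submodule.sub_mem Ks ((hKmem f).mp hf) ((hKmem g).mp hg)
    have := inner_self_eq_zero.mp h3
    exact sub_eq_zero.mp this
  -- surjectivity
  haveI : CompleteSpace Ks := (Submodule.isClosed_topologicalClosure _).completeSpace_coe
  have hsurj : ∀ x : X, BddAbove (cmSet q x) → ∃ f ∈ K, ι f = x := by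
    intro x₀ hx₀
    obtain ⟨M, hM⟩ := hx₀
    set M' := max M 0 with hM'def
    have hM'0 : 0 ≤ M' := le_max_right _ _
    have hbound : ∀ u : X →L[ℝ] ℝ, |u x₀| ≤ M' * Real.sqrt (q u u) := by
      intro u
      rcases eq_or_ne u 0 with rfl | hu0
      · simp only [ContinuousLinearMap.zero_apply, abs_zero]
        exact mul_nonneg hM'0 (Real.sqrt_nonneg _)
      · have hs : 0 < Real.sqrt (q u u) := Real.sqrt_pos.mpr (hq_pos u hu0)
        have hin : |u x₀| / Real.sqrt (q u u) ≤ M := hM ⟨u, hu0, rfl⟩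
        rw [div_le_iff₀ hs] at hin
        calc |u x₀| ≤ M * Real.sqrt (q u u) := hin
          _ ≤ M' * Real.sqrt (q u u) :=
            mul_le_mul_of_nonneg_right (le_max_left _ _) (Real.sqrt_nonneg _)
    -- bounded functional on range T
    let e := LinearEquiv.ofInjective T hTinj
    let evx : (X →L[ℝ] ℝ) →ₗ[ℝ] ℝ :=
      { toFun := fun u => u x₀
        map_add' := fun u v => rfl
        map_smul' := fun c u => rfl }
    let ψ₀ : (LinearMap.range T) →ₗ[ℝ] ℝ := evx.comp e.symm.toLinearMap
    have hψ₀ : ∀ y : LinearMap.range T, ‖ψ₀ y‖ ≤ M' * ‖y‖ := by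
      intro y
      set v := e.symm y with hv
      have hTv : T v = (y : Lp ℝ 2 μ) := by
        have h1 : e v = y := e.apply_symm_apply y
        have h2 : ((e v : LinearMap.range T) : Lp ℝ 2 μ) = T v :=
          LinearEquiv.ofInjective_apply _ _
        rw [h1] at h2
        exact h2.symm
      have : ψ₀ y = v x₀ := rfl
      rw [this, Real.norm_eq_abs]
      calc |v x₀| ≤ M' * Real.sqrt (q v v) := hbound v
        _ = M' * ‖T v‖ := by rw [hTnorm]
        _ = M' * ‖(y : Lp ℝ 2 μ)‖ := by rw [hTv]
        _ = M' * ‖y‖ := rfl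
    let ψ : (LinearMap.range T) →L[ℝ] ℝ := LinearMap.mkContinuous ψ₀ M' hψ₀
    obtain ⟨g, hg, _⟩ := exists_extension_norm_eq (LinearMap.range T) ψ
    set f₀ := (InnerProductSpace.toDual ℝ (Lp ℝ 2 μ)).symm g with hf₀def
    have hf₀ : ∀ h : Lp ℝ 2 μ, ⟪f₀, h⟫ = g h := fun h =>
      InnerProductSpace.toDual_symm_apply
    set f : Lp ℝ 2 μ := (Submodule.orthogonalProjection Ks f₀ : Lp ℝ 2 μ) with hfdef
    have hfK : f ∈ K := by
      rw [hKmem]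
      exact SetLike.coe_mem _
    have horth : ∀ w ∈ Ks, ⟪w, f₀ - f⟫ = 0 := by
      have hmem := Submodule.sub_starProjection_mem_orthogonal (K := Ks) f₀
      intro w hw
      exact (Submodule.mem_orthogonal Ks (f₀ - f)).mp hmem w hw
    have hTf : ∀ u : X →L[ℝ] ℝ, ⟪T u, f⟫ = u x₀ := by
      intro u
      have h1 : ⟪T u, f₀⟫ = u x₀ := by
        rw [real_inner_comm, hf₀ (T u)]
        have h2 : g (T u) = ψ ⟨T u, LinearMap.mem_range_self T u⟩ :=
          hg ⟨T u, LinearMap.mem_range_self T u⟩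
        rw [h2]
        have h3 : ψ ⟨T u, LinearMap.mem_range_self T u⟩
            = (e.symm ⟨T u, LinearMap.mem_range_self T u⟩) x₀ := rfl
        rw [h3]
        have h4 : e.symm ⟨T u, LinearMap.mem_range_self T u⟩ = u := by
          rw [LinearEquiv.symm_apply_eq]
          exact Subtype.ext (LinearEquiv.ofInjective_apply _ _).symm
        rw [h4]
      have h2 : ⟪T u, f₀ - f⟫ = 0 := horth _ (hTmem u)
      rw [inner_sub_right] at h2
      linarith
    refine ⟨f, hfK, ?_⟩
    have : ∀ u : X →L[ℝ] ℝ, u (ι f) = u x₀ := by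
      intro u
      rw [huι u f, hTf u]
    exact (NormedSpace.eq_iff_forall_dual_eq ℝ).mpr this
  -- now assemble everything
  refine ⟨fun f hf => ⟨hint f, hbdd f, hiso f hf⟩, ⟨fun f hf => hbdd f, ?_, ?_⟩, ?_, ?_, ?_⟩
  · -- InjOn
    intro f hf g hg hfg
    exact hinj f hf g hg hfg
  · -- SurjOn
    intro x hx
    obtain ⟨f, hfK, hfx⟩ := hsurj x hx
    exact ⟨f, hfK, hfx⟩
  · -- parallelogram
    intro x y hx hy
    obtain ⟨f, hfK, rfl⟩ := hsurj x hx
    obtain ⟨g, hgK, rfl⟩ := hsurj y hy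
    have hfg1 : f + g ∈ K := by
      rw [hKmem]; exact Submodule.add_mem Ks ((hKmem f).mp hfK) ((hKmem g).mp hgK)
    have hfg2 : f - g ∈ K := by
      rw [hKmem]; exact Submodule.sub_mem Ks ((hKmem f).mp hfK) ((hKmem g).mp hgK)
    rw [← hadd f g, ← hsub f g, hiso _ hfg1, hiso _ hfg2, hiso _ hfK, hiso _ hgK]
    have hpar := parallelogram_law_with_norm ℝ f g
    simp only [pow_two]
    nlinarith [hpar]
  · -- separability
    obtain ⟨D₀, hD₀c, hD₀d⟩ := TopologicalSpace.exists_countable_dense (↥K)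
    set D1 : Set (Lp ℝ 2 μ) := Subtype.val '' D₀ with hD1def
    have hD1c : D1.Countable := hD₀c.image _
    have hD1K : D1 ⊆ K := by
      rintro z ⟨z₀, hz₀, rfl⟩; exact z₀.2
    refine ⟨ι '' D1, hD1c.image _, ?_, ?_⟩
    · rintro y ⟨g, hg, rfl⟩
      exact hbdd g
    · intro x hx ε hε
      obtain ⟨f, hfK, rfl⟩ := hsurj x hx
      have hcl := hD₀d (⟨f, hfK⟩ : ↥K)
      rw [Metric.mem_closure_iff] at hcl
      obtain ⟨g₀, hg₀, hdist⟩ := hcl ε hε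
      refine ⟨ι (g₀ : Lp ℝ 2 μ), ⟨(g₀ : Lp ℝ 2 μ), ⟨g₀, hg₀, rfl⟩, rfl⟩, ?_⟩
      have hgK : (g₀ : Lp ℝ 2 μ) ∈ K := g₀.2
      have hfgK : f - (g₀ : Lp ℝ 2 μ) ∈ K := by
        rw [hKmem]; exact Submodule.sub_mem Ks ((hKmem f).mp hfK) ((hKmem _).mp hgK)
      rw [← hsub, hiso _ hfgK]
      rw [Subtype.dist_eq, dist_eq_norm] at hdist
      exact hdist
  · -- completeness
    intro s hsH hsC
    have hchoice : ∀ n, ∃ f ∈ K, ι f = s n := fun n => hsurj (s n) (hsH n)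
    choose f hfK hfι using hchoice
    have hdiff : ∀ m n : ℕ, cmNorm q (s m - s n) = ‖f m - f n‖ := by
      intro m n
      have hmem : f m - f n ∈ K := by
        rw [hKmem]; exact Submodule.sub_mem Ks ((hKmem _).mp (hfK m)) ((hKmem _).mp (hfK n))
      rw [← hfι m, ← hfι n, ← hsub, hiso _ hmem]
    have hcauchy : CauchySeq f := by
      rw [Metric.cauchySeq_iff]
      intro ε hε
      obtain ⟨N, hN⟩ := hsC ε hε
      exact ⟨N, fun m hm n hn => by
        rw [dist_eq_norm, ← hdiff m n]; exact hN m hm n hn⟩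
    obtain ⟨g, hg⟩ := cauchySeq_tendsto_of_complete hcauchy
    have hgK : g ∈ K := by
      have hKcl : IsClosed K := by rw [hK']; exact isClosed_closure
      exact hKcl.mem_of_tendsto hg (Eventually.of_forall hfK)
    refine ⟨ι g, hbdd g, ?_⟩
    have hlim : Tendsto (fun n => ‖f n - g‖) atTop (nhds 0) :=
      (tendsto_iff_norm_sub_tendsto_zero).mp hg
    refine hlim.congr fun n => ?_
    have hmem : f n - g ∈ K := by
      rw [hKmem]; exact Submodule.sub_mem Ks ((hKmem _).mp (hfK n)) ((hKmem _).mp hgK)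
    rw [← hfι n, ← hsub, hiso _ hmem]
end

section
/- For every finite-dimensional real inner product space 𝐂 and every continuous linear map φ : X → 𝐂: Σ_{j=1}^∞ ‖φ(e_j)‖²_𝐂 = ∫_X ‖φ(x)‖²_𝐂 dμ(x) < ∞; in particular Σ_{j=1}^∞ ‖φ(e_j)‖²_𝐂 ≤ (∫_X ‖x‖_X² dμ(x)) · ‖φ‖²_{op}, where ‖φ‖_{op} is the operator norm of φ : X → 𝐂. -/
open MeasureTheory

/-- Bessel for functionals: no completeness needed. -/
lemma besselFunctional {H : Type*} [NormedAddCommGroup H] [InnerProductSpace ℝ H]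
    {e : ℕ → H} (he : Orthonormal ℝ e) (f : H →L[ℝ] ℝ) :
    Summable (fun j => (f (e j)) ^ 2) ∧ (∑' j, (f (e j)) ^ 2) ≤ ‖f‖ ^ 2 := by
  have key : ∀ s : Finset ℕ, ∑ j ∈ s, (f (e j)) ^ 2 ≤ ‖f‖ ^ 2 := by
    intro s
    set v := ∑ j ∈ s, f (e j) • e j with hv
    have hnorm : ‖v‖ ^ 2 = ∑ j ∈ s, (f (e j)) ^ 2 := by
      rw [← real_inner_self_eq_norm_sq, hv, he.inner_sum]
      simp [sq]
    have hfv : f v = ∑ j ∈ s, (f (e j)) ^ 2 := by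
      rw [hv, map_sum]
      simp [sq, _root_.map_smul, smul_eq_mul, mul_comm]
    have hle : f v ≤ ‖f‖ * ‖v‖ := (le_abs_self _).trans (by
      rw [← Real.norm_eq_abs]; exact f.le_opNorm v)
    nlinarith [norm_nonneg v, norm_nonneg f, sq_nonneg (‖f‖ - ‖v‖)]
  have hsummable : Summable (fun j => (f (e j)) ^ 2) :=
    summable_of_sum_le (fun j => sq_nonneg _) key
  exact ⟨hsummable, Summable.tsum_le_of_sum_le hsummable key⟩


lemma integrable_sq_norm_comp {X W : Type*} [NormedAddCommGroup X] [NormedSpace ℝ X]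
    [MeasurableSpace X] [BorelSpace X] [NormedAddCommGroup W] [NormedSpace ℝ W]
    {μ : MeasureTheory.Measure X} (hC2 : Integrable (fun x => ‖x‖ ^ 2) μ) (ψ : X →L[ℝ] W) :
    Integrable (fun x => ‖ψ x‖ ^ 2) μ := by
  refine Integrable.mono' (hC2.const_mul (‖ψ‖ ^ 2)) ?_ ?_
  · exact (continuous_norm.comp ψ.continuous).pow 2 |>.aestronglyMeasurable
  · filter_upwards with x
    have h1 : ‖ψ x‖ ≤ ‖ψ‖ * ‖x‖ := ψ.le_opNorm x
    have h2 : ‖(‖ψ x‖ ^ 2 : ℝ)‖ = ‖ψ x‖ ^ 2 := by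
      rw [Real.norm_eq_abs, abs_of_nonneg (by positivity)]
    rw [h2]
    nlinarith [norm_nonneg (ψ x), norm_nonneg ψ, norm_nonneg x]

set_option maxHeartbeats 1000000 in
/-- If `H` embeds continuously in `X` via `i`, `{e_j}` is orthonormal in `H`, and
`∫ u(x)² dμ(x) = Σ_j u(e_j)²` for all `u ∈ X*`, then for every finite-dimensional real inner
product space `𝐂` and every continuous linear `φ : X → 𝐂`:
`Σ_j ‖φ(e_j)‖² = ∫ ‖φ(x)‖² dμ(x) < ∞`, and `Σ_j ‖φ(e_j)‖² ≤ (∫ ‖x‖² dμ(x)) ‖φ‖²`. -/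
theorem hilbertSchmidt_eq_integral
    {X H C : Type*} [NormedAddCommGroup X] [NormedSpace ℝ X]
    [TopologicalSpace.SeparableSpace X] [MeasurableSpace X] [BorelSpace X]
    [NormedAddCommGroup H] [InnerProductSpace ℝ H] [TopologicalSpace.SeparableSpace H]
    [NormedAddCommGroup C] [InnerProductSpace ℝ C] [FiniteDimensional ℝ C]
    (μ : Measure X) [IsProbabilityMeasure μ]
    (hC2 : Integrable (fun x => ‖x‖ ^ 2) μ)
    (i : H →L[ℝ] X) (hi : Function.Injective i)
    (e : ℕ → H) (he : Orthonormal ℝ e)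
    (hq : ∀ u : X →L[ℝ] ℝ, (∫ x, (u x) ^ 2 ∂μ) = ∑' j : ℕ, (u (i (e j))) ^ 2)
    (φ : X →L[ℝ] C) :
    Summable (fun j : ℕ => ‖φ (i (e j))‖ ^ 2) ∧
    (∑' j : ℕ, ‖φ (i (e j))‖ ^ 2) = ∫ x, ‖φ x‖ ^ 2 ∂μ ∧
    (∑' j : ℕ, ‖φ (i (e j))‖ ^ 2) ≤ (∫ x, ‖x‖ ^ 2 ∂μ) * ‖φ‖ ^ 2 := by
  classical
  set b := stdOrthonormalBasis ℝ C
  set u : Fin (Module.finrank ℝ C) → (X →L[ℝ] ℝ) :=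
    fun k => (innerSL ℝ (b k)).comp φ with hu
  -- norm squared as a finite sum of squares of functionals
  have hnorm : ∀ z : C, ‖z‖ ^ 2 = ∑ k, ((inner ℝ (b k) z : ℝ)) ^ 2 := by
    intro z
    rw [← real_inner_self_eq_norm_sq, ← b.sum_inner_mul_inner z z]
    refine Finset.sum_congr rfl fun k _ => ?_
    rw [sq, real_inner_comm z (b k)]
  have hnormφ : ∀ x : X, ‖φ x‖ ^ 2 = ∑ k, (u k x) ^ 2 := fun x => hnorm (φ x)
  -- summability of each coordinate functional along e
  have hsum_each : ∀ k, Summable (fun j : ℕ => (u k (i (e j))) ^ 2) := fun k =>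
    (besselFunctional he ((u k).comp i)).1
  have hsummable : Summable (fun j : ℕ => ‖φ (i (e j))‖ ^ 2) := by
    have : (fun j : ℕ => ‖φ (i (e j))‖ ^ 2)
        = fun j : ℕ => ∑ k, (u k (i (e j))) ^ 2 := funext fun j => hnormφ _
    rw [this]
    exact summable_sum fun k _ => hsum_each k
  -- integrability of squares of continuous linear maps
  have hintu : ∀ k, Integrable (fun x => (u k x) ^ 2) μ := by
    intro k
    have := integrable_sq_norm_comp hC2 (u k)
    simpa [Real.norm_eq_abs, sq_abs] using this
  -- main equality
  have heq : (∑' j : ℕ, ‖φ (i (e j))‖ ^ 2) = ∫ x, ‖φ x‖ ^ 2 ∂μ := by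
    calc (∑' j : ℕ, ‖φ (i (e j))‖ ^ 2)
        = ∑' j : ℕ, ∑ k, (u k (i (e j))) ^ 2 := by
          exact tsum_congr fun j => hnormφ _
      _ = ∑ k, ∑' j : ℕ, (u k (i (e j))) ^ 2 := Summable.tsum_finsetSum fun k _ => hsum_each k
      _ = ∑ k, ∫ x, (u k x) ^ 2 ∂μ := by
          exact Finset.sum_congr rfl fun k _ => (hq (u k)).symm
      _ = ∫ x, ∑ k, (u k x) ^ 2 ∂μ := (integral_finset_sum _ fun k _ => hintu k).symm
      _ = ∫ x, ‖φ x‖ ^ 2 ∂μ := by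
          exact integral_congr_ae (Filter.Eventually.of_forall fun x => (hnormφ x).symm)
  refine ⟨hsummable, heq, ?_⟩
  rw [heq]
  calc ∫ x, ‖φ x‖ ^ 2 ∂μ ≤ ∫ x, ‖φ‖ ^ 2 * ‖x‖ ^ 2 ∂μ := by
        refine integral_mono (integrable_sq_norm_comp hC2 φ) (hC2.const_mul _) fun x => ?_
        rw [← mul_pow]
        exact pow_le_pow_left₀ (norm_nonneg _) (φ.le_opNorm x) 2
    _ = (∫ x, ‖x‖ ^ 2 ∂μ) * ‖φ‖ ^ 2 := by rw [integral_const_mul, mul_comm]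
end

section
/- Let 𝐂 be a finite-dimensional real inner product space and ω : X × X → 𝐂 a continuous skew-symmetric bilinear map with ‖ω‖₀ := sup{‖ω(w₁,w₂)‖_𝐂 : ‖w₁‖_X = ‖w₂‖_X = 1}, and set C₂ := ∫_X ‖x‖_X² dμ(x). Then (i) for every w ∈ X: Σ_{j=1}^∞ ‖ω(w,e_j)‖²_𝐂 ≤ C₂ ‖ω‖₀² ‖w‖_X², and (ii) Σ_{i,j=1}^∞ ‖ω(e_i,e_j)‖²_𝐂 = ∫_X ∫_X ‖ω(w,w′)‖²_𝐂 dμ(w) dμ(w′) ≤ ‖ω‖₀² C₂² < ∞. -/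
open MeasureTheory

/-- Bessel-type bound for a continuous linear functional along an orthonormal sequence. -/
private lemma bessel_functional_sum_le {H : Type*} [NormedAddCommGroup H]
    [InnerProductSpace ℝ H] {e : ℕ → H} (he : Orthonormal ℝ e) (φ : H →L[ℝ] ℝ)
    (s : Finset ℕ) : ∑ j ∈ s, φ (e j) ^ 2 ≤ ‖φ‖ ^ 2 := by
  set v := ∑ j ∈ s, φ (e j) • e j with hv
  have hvn : (inner ℝ v v : ℝ) = ∑ j ∈ s, φ (e j) ^ 2 := by
    rw [hv, he.inner_sum]
    simp [sq]
  have h1 : ∑ j ∈ s, φ (e j) ^ 2 = φ v := by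
    rw [hv, map_sum]
    simp [sq]
  have h2 : φ v ≤ ‖φ‖ * ‖v‖ := le_trans (le_abs_self _) (φ.le_opNorm v)
  have h3 : ‖v‖ ^ 2 = ∑ j ∈ s, φ (e j) ^ 2 := by
    rw [← real_inner_self_eq_norm_sq, hvn]
  nlinarith [norm_nonneg v, norm_nonneg φ, sq_nonneg (‖φ‖ - ‖v‖)]

private lemma bessel_functional {H : Type*} [NormedAddCommGroup H]
    [InnerProductSpace ℝ H] {e : ℕ → H} (he : Orthonormal ℝ e) (φ : H →L[ℝ] ℝ) :
    Summable fun j => φ (e j) ^ 2 :=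
  summable_of_sum_le (fun _ => sq_nonneg _) (bessel_functional_sum_le he φ)

/-- Integrability of `x ↦ ‖T x‖²` against a measure with finite second moment. -/
private lemma int_sq {X E : Type*} [NormedAddCommGroup X] [NormedSpace ℝ X]
    [MeasurableSpace X] [BorelSpace X] [NormedAddCommGroup E] [NormedSpace ℝ E]
    {μ : Measure X} (hC2 : Integrable (fun x => ‖x‖ ^ 2) μ) (T : X →L[ℝ] E) :
    Integrable (fun x => ‖T x‖ ^ 2) μ := by
  refine (hC2.const_mul (‖T‖ ^ 2)).mono'
    ((T.continuous.norm.pow 2).aestronglyMeasurable) (ae_of_all _ fun x => ?_)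
  rw [Real.norm_eq_abs, abs_of_nonneg (by positivity)]
  calc ‖T x‖ ^ 2 ≤ (‖T‖ * ‖x‖) ^ 2 := pow_le_pow_left₀ (norm_nonneg _) (T.le_opNorm x) 2
    _ = ‖T‖ ^ 2 * ‖x‖ ^ 2 := mul_pow _ _ _

/-- Parseval-type identity: for any continuous linear `T : X →L[ℝ] C` with `C`
finite-dimensional, the squared norms along the image of the orthonormal basis
sum to the second moment of `‖T x‖`. -/
private lemma auxA {X H C : Type*} [NormedAddCommGroup X] [NormedSpace ℝ X]
    [MeasurableSpace X] [BorelSpace X]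
    [NormedAddCommGroup H] [InnerProductSpace ℝ H]
    [NormedAddCommGroup C] [InnerProductSpace ℝ C] [FiniteDimensional ℝ C]
    (μ : Measure X)
    (hC2 : Integrable (fun x => ‖x‖ ^ 2) μ)
    (i : H →L[ℝ] X) {e : ℕ → H} (he : Orthonormal ℝ e)
    (hq : ∀ u : X →L[ℝ] ℝ, (∫ x, (u x) ^ 2 ∂μ) = ∑' j : ℕ, (u (i (e j))) ^ 2)
    (T : X →L[ℝ] C) :
    Summable (fun j => ‖T (i (e j))‖ ^ 2) ∧
      (∑' j : ℕ, ‖T (i (e j))‖ ^ 2) = ∫ x, ‖T x‖ ^ 2 ∂μ := by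
  set b := stdOrthonormalBasis ℝ C with hb
  set u : Fin (Module.finrank ℝ C) → (X →L[ℝ] ℝ) :=
    fun k => (innerSL ℝ (b k)).comp T with hu
  have hu_apply : ∀ k x, u k x = (inner ℝ (b k) (T x) : ℝ) := fun k x => rfl
  have hnorm : ∀ c : C, ‖c‖ ^ 2 = ∑ k, (inner ℝ (b k) c : ℝ) ^ 2 := by
    intro c
    rw [← real_inner_self_eq_norm_sq, ← b.sum_inner_mul_inner c c]
    refine Finset.sum_congr rfl fun k _ => ?_
    rw [real_inner_comm c (b k), sq]
  have hsum_k : ∀ k, Summable fun j => (u k (i (e j))) ^ 2 := by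
    intro k
    have := bessel_functional he ((u k).comp i)
    simpa using this
  have hS : Summable (fun j => ‖T (i (e j))‖ ^ 2) := by
    have : (fun j => ‖T (i (e j))‖ ^ 2)
        = fun j => ∑ k, (u k (i (e j))) ^ 2 := by
      funext j
      rw [hnorm]
      exact Finset.sum_congr rfl fun k _ => by rw [hu_apply]
    rw [this]
    exact summable_sum fun k _ => hsum_k k
  refine ⟨hS, ?_⟩
  have hint : ∀ k, Integrable (fun x => (u k x) ^ 2) μ := by
    intro k
    have := int_sq hC2 (u k)
    simpa [Real.norm_eq_abs, sq_abs] using this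
  calc (∑' j : ℕ, ‖T (i (e j))‖ ^ 2)
      = ∑' j : ℕ, ∑ k, (u k (i (e j))) ^ 2 := by
        congr 1; funext j; rw [hnorm]
        exact Finset.sum_congr rfl fun k _ => by rw [hu_apply]
    _ = ∑ k, ∑' j : ℕ, (u k (i (e j))) ^ 2 := Summable.tsum_finsetSum fun k _ => hsum_k k
    _ = ∑ k, ∫ x, (u k x) ^ 2 ∂μ := by
        refine Finset.sum_congr rfl fun k _ => ?_
        rw [hq (u k)]
    _ = ∫ x, ∑ k, (u k x) ^ 2 ∂μ := (integral_finset_sum _ fun k _ => hint k).symm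
    _ = ∫ x, ‖T x‖ ^ 2 ∂μ := by
        congr 1; funext x; rw [hnorm]
        exact (Finset.sum_congr rfl fun k _ => by rw [hu_apply]).symm

/-- Norm estimates for a continuous skew-symmetric bilinear `ω : X × X → 𝐂` over an abstract
Wiener-type space: (i) `Σ_j ‖ω(w,e_j)‖² ≤ C₂ ‖ω‖₀² ‖w‖²` for all `w ∈ X`, and
(ii) `Σ_{i,j} ‖ω(e_i,e_j)‖² = ∫∫ ‖ω(w,w′)‖² dμ(w) dμ(w′) ≤ ‖ω‖₀² C₂² < ∞`. -/
theorem omega_hilbertSchmidt_estimates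
    {X H C : Type*} [NormedAddCommGroup X] [NormedSpace ℝ X]
    [TopologicalSpace.SeparableSpace X] [MeasurableSpace X] [BorelSpace X]
    [NormedAddCommGroup H] [InnerProductSpace ℝ H] [TopologicalSpace.SeparableSpace H]
    [NormedAddCommGroup C] [InnerProductSpace ℝ C] [FiniteDimensional ℝ C]
    (μ : Measure X) [IsProbabilityMeasure μ]
    (hC2 : Integrable (fun x => ‖x‖ ^ 2) μ)
    (i : H →L[ℝ] X) (hi : Function.Injective i)
    (e : ℕ → H) (he : Orthonormal ℝ e)
    (hq : ∀ u : X →L[ℝ] ℝ, (∫ x, (u x) ^ 2 ∂μ) = ∑' j : ℕ, (u (i (e j))) ^ 2)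
    (ω : X →L[ℝ] X →L[ℝ] C)
    (hskew : ∀ w₁ w₂ : X, ω w₁ w₂ = - ω w₂ w₁) :
    (∀ w : X,
      (∑' j : ℕ, ‖ω w (i (e j))‖ ^ 2) ≤ (∫ x, ‖x‖ ^ 2 ∂μ) * ‖ω‖ ^ 2 * ‖w‖ ^ 2) ∧
    (∑' p : ℕ × ℕ, ‖ω (i (e p.1)) (i (e p.2))‖ ^ 2) =
      (∫ w, ∫ w', ‖ω w w'‖ ^ 2 ∂μ ∂μ) ∧
    (∑' p : ℕ × ℕ, ‖ω (i (e p.1)) (i (e p.2))‖ ^ 2) ≤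
      ‖ω‖ ^ 2 * (∫ x, ‖x‖ ^ 2 ∂μ) ^ 2 := by
  set C₂ := ∫ x, ‖x‖ ^ 2 ∂μ with hC₂def
  have hC₂nonneg : 0 ≤ C₂ := integral_nonneg fun x => sq_nonneg _
  -- second-moment bound for a single continuous linear map
  have hbd : ∀ T : X →L[ℝ] C, (∫ x, ‖T x‖ ^ 2 ∂μ) ≤ ‖T‖ ^ 2 * C₂ := by
    intro T
    calc (∫ x, ‖T x‖ ^ 2 ∂μ) ≤ ∫ x, ‖T‖ ^ 2 * ‖x‖ ^ 2 ∂μ := by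
          refine integral_mono (int_sq hC2 T) (hC2.const_mul _) fun x => ?_
          calc ‖T x‖ ^ 2 ≤ (‖T‖ * ‖x‖) ^ 2 :=
                pow_le_pow_left₀ (norm_nonneg _) (T.le_opNorm x) 2
            _ = ‖T‖ ^ 2 * ‖x‖ ^ 2 := mul_pow _ _ _
      _ = ‖T‖ ^ 2 * C₂ := integral_const_mul _ _
  -- part (i), together with the identity from `auxA`
  have hA : ∀ w : X, Summable (fun j => ‖ω w (i (e j))‖ ^ 2) ∧
      (∑' j : ℕ, ‖ω w (i (e j))‖ ^ 2) = ∫ x, ‖ω w x‖ ^ 2 ∂μ :=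
    fun w => auxA μ hC2 i he hq (ω w)
  have hpart1 : ∀ w : X,
      (∑' j : ℕ, ‖ω w (i (e j))‖ ^ 2) ≤ C₂ * ‖ω‖ ^ 2 * ‖w‖ ^ 2 := by
    intro w
    rw [(hA w).2]
    calc (∫ x, ‖ω w x‖ ^ 2 ∂μ) ≤ ‖ω w‖ ^ 2 * C₂ := hbd (ω w)
      _ ≤ (‖ω‖ * ‖w‖) ^ 2 * C₂ := by
          exact mul_le_mul_of_nonneg_right
            (pow_le_pow_left₀ (norm_nonneg _) (ω.le_opNorm w) 2) hC₂nonneg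
      _ = C₂ * ‖ω‖ ^ 2 * ‖w‖ ^ 2 := by ring
  refine ⟨hpart1, ?_⟩
  -- the family g j x = ‖ω x (i (e j))‖², using `flip`
  set g : ℕ → X → ℝ := fun j x => ‖ω x (i (e j))‖ ^ 2 with hg
  have hgflip : ∀ j, g j = fun x => ‖ω.flip (i (e j)) x‖ ^ 2 := fun j => rfl
  have hgint : ∀ j, Integrable (g j) μ := by
    intro j; rw [hgflip j]; exact int_sq hC2 (ω.flip (i (e j)))
  have hgnn : ∀ j x, 0 ≤ g j x := fun j x => sq_nonneg _
  -- pointwise: for every x, ∑' j, g j x = ∫ ‖ω x w'‖² dμ(w')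
  have hGpt : ∀ x : X, Summable (fun j => g j x) ∧
      (∑' j : ℕ, g j x) = ∫ w', ‖ω x w'‖ ^ 2 ∂μ := fun x => hA x
  -- skew symmetry: norms are symmetric
  have hns : ∀ w₁ w₂ : X, ‖ω w₁ w₂‖ = ‖ω w₂ w₁‖ := by
    intro w₁ w₂; rw [hskew w₁ w₂, norm_neg]
  -- row sums a j := ∫ g j dμ are summable with total ≤ ‖ω‖² C₂²
  set a : ℕ → ℝ := fun j => ∫ x, g j x ∂μ with ha
  have hann : ∀ j, 0 ≤ a j := fun j => integral_nonneg fun x => hgnn j x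
  have hasum_le : ∀ s : Finset ℕ, ∑ j ∈ s, a j ≤ ‖ω‖ ^ 2 * C₂ ^ 2 := by
    intro s
    have h1 : ∑ j ∈ s, a j = ∫ x, ∑ j ∈ s, g j x ∂μ :=
      (integral_finset_sum s fun j _ => hgint j).symm
    rw [h1]
    calc (∫ x, ∑ j ∈ s, g j x ∂μ) ≤ ∫ x, C₂ * ‖ω‖ ^ 2 * ‖x‖ ^ 2 ∂μ := by
          refine integral_mono (integrable_finset_sum s fun j _ => hgint j)
            ((hC2.const_mul _)) fun x => ?_
          calc ∑ j ∈ s, g j x ≤ ∑' j : ℕ, g j x :=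
                Summable.sum_le_tsum s (fun j _ => hgnn j x) (hGpt x).1
            _ ≤ C₂ * ‖ω‖ ^ 2 * ‖x‖ ^ 2 := hpart1 x
      _ = C₂ * ‖ω‖ ^ 2 * C₂ := integral_const_mul _ _
      _ = ‖ω‖ ^ 2 * C₂ ^ 2 := by ring
  have haS : Summable a := summable_of_sum_le hann hasum_le
  -- row sums of the double array equal a
  have hrow : ∀ m : ℕ, (∑' j : ℕ, ‖ω (i (e m)) (i (e j))‖ ^ 2) = a m := by
    intro m
    rw [(hA (i (e m))).2, ha]
    refine integral_congr_ae (ae_of_all _ fun x => ?_)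
    rw [hg]; dsimp only; rw [hns (i (e m)) x]
  -- summability of the double sum
  have hFnn : 0 ≤ fun p : ℕ × ℕ => ‖ω (i (e p.1)) (i (e p.2))‖ ^ 2 :=
    fun p => sq_nonneg _
  have hFrow : ∀ m, Summable fun j => ‖ω (i (e m)) (i (e j))‖ ^ 2 :=
    fun m => (hA (i (e m))).1
  have hFsummable : Summable fun p : ℕ × ℕ => ‖ω (i (e p.1)) (i (e p.2))‖ ^ 2 := by
    rw [summable_prod_of_nonneg hFnn]
    refine ⟨fun m => hFrow m, ?_⟩
    have : (fun m => ∑' j : ℕ, ‖ω (i (e m)) (i (e j))‖ ^ 2) = a := by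
      funext m; exact hrow m
    rw [this]; exact haS
  have hdouble : (∑' p : ℕ × ℕ, ‖ω (i (e p.1)) (i (e p.2))‖ ^ 2) = ∑' m : ℕ, a m := by
    rw [Summable.tsum_prod' hFsummable fun m => hFrow m]
    exact tsum_congr hrow
  -- exchange sum and integral: ∑' m, a m = ∫ ∑' m, g m x dμ
  have hgmeas : ∀ j, AEStronglyMeasurable (g j) μ := by
    intro j; rw [hgflip j]
    exact ((ω.flip (i (e j))).continuous.norm.pow 2).aestronglyMeasurable
  have hlint : (∑' j : ℕ, ∫⁻ x, ‖g j x‖₊ ∂μ) ≠ ⊤ := by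
    have h1 : ∀ j, (∫⁻ x, ‖g j x‖₊ ∂μ) = ENNReal.ofReal (a j) := by
      intro j
      rw [ha]
      rw [ofReal_integral_eq_lintegral_ofReal (hgint j) (ae_of_all _ fun x => hgnn j x)]
      refine lintegral_congr fun x => ?_
      exact Real.enorm_eq_ofReal (hgnn j x)
    simp_rw [h1]
    rw [← ENNReal.ofReal_tsum_of_nonneg hann haS]
    exact ENNReal.ofReal_ne_top
  have hswap : (∑' m : ℕ, a m) = ∫ x, ∑' m : ℕ, g m x ∂μ := by
    rw [ha]
    exact (integral_tsum hgmeas hlint).symm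
  have hinner : (∫ x, ∑' m : ℕ, g m x ∂μ) = ∫ w, ∫ w', ‖ω w w'‖ ^ 2 ∂μ ∂μ := by
    refine integral_congr_ae (ae_of_all _ fun x => ?_)
    exact (hGpt x).2
  constructor
  · rw [hdouble, hswap, hinner]
  · rw [hdouble]
    exact Summable.tsum_le_of_sum_le haS hasum_le
end
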